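/- arXiv:2403.02843 — 6 statements merged into one kernel-verified Lean document; each statement's English description precedes it below -/
import Mathlib

section
/- Every generalized hyperbolic continuous linear operator T on a locally convex space X has the finite shadowing property. -/
open Filter Topology Set

/-- `T` is a generalized hyperbolic operator on the locally convex space `X`, whose topology is
induced by the family of seminorms `p`: there is a topological direct sum decomposition
`X = M ⊕ N` (the canonical projection onto `M` along `N` is continuous) such that
(GH1) `T(M) ⊆ M`; (GH2) `N ⊆ T(N)` and `T|_N : N → T(N)` is an isomorphism of topological
vector spaces (i.e. `T` is injective on `N` and admits a continuous inverse `S` on `T(N)`);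
(GH3) for every `α` there are `β`, `c > 0`, `t ∈ (0,1)` with `pα (Tⁿ y) ≤ c tⁿ pβ y` and
`pα (Sⁿ z) ≤ c tⁿ pβ z` for all `y ∈ M`, `z ∈ N`, `n ∈ ℕ`. -/
def IsGeneralizedHyperbolic {𝕂 : Type*} [RCLike 𝕂] {X : Type*} [AddCommGroup X] [Module 𝕂 X]
    [TopologicalSpace X] {I : Type*} (p : I → Seminorm 𝕂 X) (T : X →L[𝕂] X) : Prop :=
  ∃ (M N : Submodule 𝕂 X) (hMN : IsCompl M N),
    Continuous (fun x : X => (M.linearProjOfIsCompl N hMN x : X)) ∧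
    (∀ y ∈ M, T y ∈ M) ∧
    (N : Set X) ⊆ ⇑T '' (N : Set X) ∧
    Set.InjOn ⇑T (N : Set X) ∧
    ∃ S : X → X,
      (∀ z ∈ ⇑T '' (N : Set X), S z ∈ N ∧ T (S z) = z) ∧
      ContinuousOn S (⇑T '' (N : Set X)) ∧
      ∀ α : I, ∃ β : I, ∃ c > (0 : ℝ), ∃ t ∈ Set.Ioo (0 : ℝ) 1,
        (∀ y ∈ M, ∀ n : ℕ, p α ((⇑T)^[n] y) ≤ c * t ^ n * p β y) ∧
        (∀ z ∈ N, ∀ n : ℕ, p α (S^[n] z) ≤ c * t ^ n * p β z)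

/-- `T` has the finite shadowing property: for every neighborhood `V` of `0` there is a
neighborhood `U` of `0` such that every `U`-chain `(x_j)_{j=0}^k` for `T` is `V`-shadowed by
the trajectory of some point `y`. -/
def FiniteShadowingProperty {X : Type*} [AddCommGroup X] [TopologicalSpace X]
    (T : X → X) : Prop :=
  ∀ V ∈ 𝓝 (0 : X), ∃ U ∈ 𝓝 (0 : X), ∀ (k : ℕ), 1 ≤ k → ∀ x : ℕ → X,
    (∀ j < k, T (x j) - x (j + 1) ∈ U) →
    ∃ y : X, ∀ j ≤ k, x j - T^[j] y ∈ V

/-- A seminorm of a finite sum is at most the sum of the seminorms. -/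
lemma seminorm_sum_le' {𝕂 : Type*} [RCLike 𝕂] {X : Type*} [AddCommGroup X] [Module 𝕂 X]
    (q : Seminorm 𝕂 X) {ι : Type*} (s : Finset ι) (f : ι → X) :
    q (∑ i ∈ s, f i) ≤ ∑ i ∈ s, q (f i) := by
  classical
  induction s using Finset.induction_on with
  | empty => simp
  | insert _ _ h ih =>
    rw [Finset.sum_insert h, Finset.sum_insert h]
    exact (map_add_le_add q _ _).trans (add_le_add le_rfl ih)

/-- Every generalized hyperbolic operator on a locally convex space has the finite shadowing
property. -/
theorem generalizedHyperbolic_finiteShadowing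
    {𝕂 : Type*} [RCLike 𝕂] {X : Type*} [AddCommGroup X] [Module 𝕂 X]
    [TopologicalSpace X] [IsTopologicalAddGroup X] [ContinuousSMul 𝕂 X]
    {I : Type*} [Nonempty I] (p : I → Seminorm 𝕂 X) (hp : WithSeminorms p)
    (hdir : ∀ α β : I, ∃ γ : I, p α ≤ p γ ∧ p β ≤ p γ)
    (T : X →L[𝕂] X) (hT : IsGeneralizedHyperbolic p T) :
    FiniteShadowingProperty (⇑T) := by
  classical
  obtain ⟨M, N, hMN, hπ, hTM, hsub, hinj, S, hS, hScont, hGH3⟩ := hT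
  -- directedness: finite sups are dominated by a single seminorm
  have hsup : ∀ s : Finset I, ∃ γ : I, ∀ i ∈ s, p i ≤ p γ := by
    intro s
    induction s using Finset.induction_on with
    | empty => exact ⟨Classical.arbitrary I, by simp⟩
    | @insert a s _ ih =>
      obtain ⟨γ, hγ⟩ := ih
      obtain ⟨δ, hδ1, hδ2⟩ := hdir a γ
      refine ⟨δ, fun i hi => ?_⟩
      rcases Finset.mem_insert.mp hi with rfl | hi
      · exact hδ1
      · exact (hγ i hi).trans hδ2
  intro V hV
  -- find a single seminorm ball inside V
  obtain ⟨W, hW, hWV⟩ := hp.hasBasis.mem_iff.mp hV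
  obtain ⟨s, ε, hε, rfl⟩ := (SeminormFamily.basisSets_iff p).mp hW
  obtain ⟨α, hα⟩ := hsup s
  have hball : (p α).ball 0 ε ⊆ V :=
    (Seminorm.ball_antitone (Finset.sup_le hα)).trans hWV
  -- GH3 data
  obtain ⟨β, c, hc, t, ht, hTest, hSest⟩ := hGH3 α
  have ht0 : (0 : ℝ) < t := ht.1
  have ht1 : t < 1 := ht.2
  set δ : ℝ := ε * (1 - t) / (4 * c) with hδdef
  have hδ : 0 < δ := by
    apply div_pos (mul_pos hε (by linarith)) (by linarith)
  -- the projection onto M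
  set π : X → X := fun x : X => (M.linearProjOfIsCompl N hMN x : X) with hπdef
  have hπ0 : π 0 = 0 := by simp [hπdef]
  have hπadd : ∀ a b : X, π (a + b) = π a + π b := by intro a b; simp [hπdef]
  have hπmem : ∀ z : X, π z ∈ M := fun z => (M.linearProjOfIsCompl N hMN z).2
  have hπN : ∀ z : X, z - π z ∈ N := by
    intro z
    have hz : M.linearProjOfIsCompl N hMN (z - π z) = 0 := by
      rw [map_sub]
      have : M.linearProjOfIsCompl N hMN (π z) = M.linearProjOfIsCompl N hMN z := by
        simp [hπdef, Submodule.linearProjOfIsCompl_apply_left hMN]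
        exact Submodule.linearProjOfIsCompl_apply_left hMN _
      rw [this, sub_self]
    exact (Submodule.linearProjOfIsCompl_apply_eq_zero_iff hMN).mp hz
  -- the ball for p β is a neighborhood of zero
  have hballβ : (p β).ball 0 δ ∈ 𝓝 (0 : X) := by
    rw [Seminorm.ball_zero_eq]
    exact (isOpen_lt (hp.continuous_seminorm β) continuous_const).mem_nhds (by simp [hδ])
  -- the neighborhood U
  set U : Set X := π ⁻¹' ((p β).ball 0 δ) ∩ (fun z : X => z - π z) ⁻¹' ((p β).ball 0 δ) with hUdef
  have hU : U ∈ 𝓝 (0 : X) := by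
    apply Filter.inter_mem
    · exact hπ.continuousAt.preimage_mem_nhds (by rw [show π 0 = 0 from hπ0]; exact hballβ)
    · have hc2 : Continuous fun z : X => z - π z := continuous_id.sub hπ
      exact hc2.continuousAt.preimage_mem_nhds
        (by rw [show (0 : X) - π 0 = 0 by rw [hπ0, sub_zero]]; exact hballβ)
  refine ⟨U, hU, ?_⟩
  intro k hk x hchain
  -- errors and their decomposition
  set e : ℕ → X := fun j => T (x j) - x (j + 1) with hedef
  set v : ℕ → X := fun j => π (e j) with hvdef
  set w : ℕ → X := fun j => e j - π (e j) with hwdef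
  have hvM : ∀ j, v j ∈ M := fun j => hπmem (e j)
  have hwN : ∀ j, w j ∈ N := fun j => hπN (e j)
  have hevw : ∀ j, e j = v j + w j := by intro j; simp [hvdef, hwdef]
  have hvsmall : ∀ j < k, p β (v j) < δ := by
    intro j hj
    have := (hchain j hj).1
    rwa [Set.mem_preimage, Seminorm.mem_ball_zero] at this
  have hwsmall : ∀ j < k, p β (w j) < δ := by
    intro j hj
    have := (hchain j hj).2
    rwa [Set.mem_preimage, Seminorm.mem_ball_zero] at this
  -- facts about S on N
  have hSN : ∀ z ∈ N, S z ∈ N := fun z hz => (hS z (hsub hz)).1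
  have hTS : ∀ z ∈ N, T (S z) = z := fun z hz => (hS z (hsub hz)).2
  have hSiter : ∀ (m : ℕ) (z : X), z ∈ N → S^[m] z ∈ N := by
    intro m
    induction m with
    | zero => intro z hz; simpa using hz
    | succ m ih =>
      intro z hz
      rw [Function.iterate_succ_apply']
      exact hSN _ (ih z hz)
  have hTSiter : ∀ (m : ℕ) (z : X), z ∈ N → T (S^[m + 1] z) = S^[m] z := by
    intro m z hz
    rw [Function.iterate_succ_apply']
    exact hTS _ (hSiter m z hz)
  -- the shadowing point
  set y : X := x 0 - ∑ i ∈ Finset.range k, S^[i + 1] (w i) with hydef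
  refine ⟨y, ?_⟩
  -- the key formula
  have key : ∀ j, j ≤ k → x j - (⇑T)^[j] y =
      -(∑ i ∈ Finset.range j, (⇑T)^[j - 1 - i] (v i)) +
        ∑ i ∈ Finset.Ico j k, S^[i + 1 - j] (w i) := by
    intro j
    induction j with
    | zero =>
      intro _
      rw [Function.iterate_zero_apply, hydef, sub_sub_cancel, Finset.range_zero,
        Finset.sum_empty, neg_zero, zero_add, Finset.range_eq_Ico]
      exact Finset.sum_congr rfl fun i _ => by norm_num
    | succ j ih =>
      intro hj1
      have hjk : j < k := hj1
      have ihj := ih hjk.le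
      have hx1 : x (j + 1) = T (x j) - e j := by simp [hedef]
      have hTA : T (∑ i ∈ Finset.range j, (⇑T)^[j - 1 - i] (v i)) =
          ∑ i ∈ Finset.range j, (⇑T)^[j - i] (v i) := by
        rw [map_sum]
        refine Finset.sum_congr rfl fun i hi => ?_
        rw [Finset.mem_range] at hi
        have h1 : j - i = (j - 1 - i) + 1 := by omega
        rw [h1, Function.iterate_succ_apply']
      have hTB : T (∑ i ∈ Finset.Ico j k, S^[i + 1 - j] (w i)) =
          w j + ∑ i ∈ Finset.Ico (j + 1) k, S^[i + 1 - (j + 1)] (w i) := by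
        rw [← Finset.insert_Ico_add_one_left_eq_Ico hjk, Finset.sum_insert (by simp), map_add, map_sum]
        congr 1
        · have h2 : j + 1 - j = 1 := by omega
          rw [h2]
          simpa using hTS _ (hwN j)
        · refine Finset.sum_congr rfl fun i hi => ?_
          rw [Finset.mem_Ico] at hi
          have h3 : i + 1 - j = (i - j) + 1 := by omega
          have h4 : i + 1 - (j + 1) = i - j := by omega
          rw [h3, h4]
          exact hTSiter _ _ (hwN i)
      calc x (j + 1) - (⇑T)^[j + 1] y = T (x j - (⇑T)^[j] y) - e j := by
            rw [hx1, Function.iterate_succ_apply', map_sub]; abel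
        _ = -(T (∑ i ∈ Finset.range j, (⇑T)^[j - 1 - i] (v i))) +
              T (∑ i ∈ Finset.Ico j k, S^[i + 1 - j] (w i)) - e j := by
            rw [ihj, map_add, map_neg]
        _ = -(∑ i ∈ Finset.range (j + 1), (⇑T)^[j + 1 - 1 - i] (v i)) +
              ∑ i ∈ Finset.Ico (j + 1) k, S^[i + 1 - (j + 1)] (w i) := by
            rw [hTA, hTB, Finset.sum_range_succ]
            have hvj : (⇑T)^[j + 1 - 1 - j] (v j) = v j := by
              have h5 : j + 1 - 1 - j = 0 := by omega
              rw [h5]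
              exact Function.iterate_zero_apply _ _
            have hsc : ∑ i ∈ Finset.range j, (⇑T)^[j + 1 - 1 - i] (v i) =
                ∑ i ∈ Finset.range j, (⇑T)^[j - i] (v i) := rfl
            rw [hsc, hvj, hevw j]
            abel
  -- geometric sum bound
  have hgeom : ∀ r : ℕ, ∑ i ∈ Finset.range r, t ^ i ≤ 1 / (1 - t) := by
    intro r
    rw [le_div_iff₀ (by linarith)]
    have h6 : (∑ i ∈ Finset.range r, t ^ i) * (1 - t) = 1 - t ^ r := by
      linear_combination -(geom_sum_mul t r)
    have h7 : (0 : ℝ) ≤ t ^ r := pow_nonneg ht0.le r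
    linarith
  -- the estimate
  intro j hj
  apply hball
  rw [Seminorm.mem_ball_zero, key j hj]
  have hA : p α (∑ i ∈ Finset.range j, (⇑T)^[j - 1 - i] (v i)) ≤ c * δ / (1 - t) := by
    calc p α (∑ i ∈ Finset.range j, (⇑T)^[j - 1 - i] (v i))
        ≤ ∑ i ∈ Finset.range j, p α ((⇑T)^[j - 1 - i] (v i)) := seminorm_sum_le' _ _ _
      _ ≤ ∑ i ∈ Finset.range j, c * t ^ (j - 1 - i) * δ := by
          refine Finset.sum_le_sum fun i hi => ?_
          rw [Finset.mem_range] at hi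
          refine (hTest (v i) (hvM i) (j - 1 - i)).trans ?_
          have hvle : p β (v i) ≤ δ := (hvsmall i (lt_of_lt_of_le hi hj)).le
          have hpos : (0 : ℝ) ≤ c * t ^ (j - 1 - i) :=
            mul_nonneg hc.le (pow_nonneg ht0.le _)
          calc c * t ^ (j - 1 - i) * p β (v i) ≤ c * t ^ (j - 1 - i) * δ :=
                mul_le_mul_of_nonneg_left hvle hpos
            _ = c * t ^ (j - 1 - i) * δ := rfl
      _ = c * δ * ∑ i ∈ Finset.range j, t ^ (j - 1 - i) := by
          rw [Finset.mul_sum]; exact Finset.sum_congr rfl fun i _ => by ring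
      _ = c * δ * ∑ i ∈ Finset.range j, t ^ i := by
          rw [Finset.sum_range_reflect (fun i => t ^ i) j]
      _ ≤ c * δ * (1 / (1 - t)) := by
          exact mul_le_mul_of_nonneg_left (hgeom j) (mul_nonneg hc.le hδ.le)
      _ = c * δ / (1 - t) := by ring
  have hB : p α (∑ i ∈ Finset.Ico j k, S^[i + 1 - j] (w i)) ≤ c * δ / (1 - t) := by
    calc p α (∑ i ∈ Finset.Ico j k, S^[i + 1 - j] (w i))
        ≤ ∑ i ∈ Finset.Ico j k, p α (S^[i + 1 - j] (w i)) := seminorm_sum_le' _ _ _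
      _ ≤ ∑ i ∈ Finset.Ico j k, c * t ^ (i + 1 - j) * δ := by
          refine Finset.sum_le_sum fun i hi => ?_
          rw [Finset.mem_Ico] at hi
          refine (hSest (w i) (hwN i) (i + 1 - j)).trans ?_
          have hwle : p β (w i) ≤ δ := (hwsmall i hi.2).le
          have hpos : (0 : ℝ) ≤ c * t ^ (i + 1 - j) :=
            mul_nonneg hc.le (pow_nonneg ht0.le _)
          exact mul_le_mul_of_nonneg_left hwle hpos
      _ = c * δ * ∑ i ∈ Finset.Ico j k, t ^ (i + 1 - j) := by
          rw [Finset.mul_sum]; exact Finset.sum_congr rfl fun i _ => by ring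
      _ ≤ c * δ * ∑ i ∈ Finset.Ico j k, t ^ (i - j) := by
          refine mul_le_mul_of_nonneg_left ?_ (mul_nonneg hc.le hδ.le)
          refine Finset.sum_le_sum fun i hi => ?_
          rw [Finset.mem_Ico] at hi
          exact pow_le_pow_of_le_one ht0.le ht1.le (by omega)
      _ = c * δ * ∑ i ∈ Finset.range (k - j), t ^ i := by
          rw [Finset.sum_Ico_eq_sum_range]
          congr 1
          exact Finset.sum_congr rfl fun i _ => by rw [Nat.add_sub_cancel_left]
      _ ≤ c * δ * (1 / (1 - t)) :=
          mul_le_mul_of_nonneg_left (hgeom (k - j)) (mul_nonneg hc.le hδ.le)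
      _ = c * δ / (1 - t) := by ring
  calc p α (-(∑ i ∈ Finset.range j, (⇑T)^[j - 1 - i] (v i)) +
        ∑ i ∈ Finset.Ico j k, S^[i + 1 - j] (w i))
      ≤ p α (-(∑ i ∈ Finset.range j, (⇑T)^[j - 1 - i] (v i))) +
        p α (∑ i ∈ Finset.Ico j k, S^[i + 1 - j] (w i)) := map_add_le_add _ _ _
    _ = p α (∑ i ∈ Finset.range j, (⇑T)^[j - 1 - i] (v i)) +
        p α (∑ i ∈ Finset.Ico j k, S^[i + 1 - j] (w i)) := by rw [map_neg_eq_map]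
    _ ≤ c * δ / (1 - t) + c * δ / (1 - t) := add_le_add hA hB
    _ < ε := by
        have h1t : (0 : ℝ) < 1 - t := by linarith
        have hAe : (c * δ / (1 - t)) * (1 - t) = c * δ :=
          div_mul_cancel₀ _ (ne_of_gt h1t)
        have hcd : c * δ = ε * (1 - t) / 4 := by
          rw [hδdef]
          field_simp
        nlinarith [mul_pos hε h1t]
end

section
/- Let X be a topological vector space over ℝ or ℂ and let T ∈ L(X) have the periodic shadowing property. Then: (a) Per(T) is dense in CR(T); (b) the restriction T|_{CR(T)} (a continuous linear operator on the closed T-invariant subspace CR(T)) has the finite shadowing property and the periodic shadowing property; (c) T|_{CR(T)} is topologically mixing and Devaney chaotic. Moreover, if T has the strict periodic shadowing property, then T|_{CR(T)} has the strict periodic shadowing property. -/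
open Filter Topology Set

section Defs

variable {X : Type*} [AddCommGroup X] [TopologicalSpace X]

/-- The set of periodic points of `T`. -/
def PerSet (T : X → X) : Set X := {x | ∃ k : ℕ, 1 ≤ k ∧ T^[k] x = x}

/-- The chain recurrent set of `T`: `x` is chain recurrent if for every neighborhood `U` of `0`
there is a `U`-chain (a `U`-cycle) for `T` from `x` to itself. -/
def CRSet (T : X → X) : Set X :=
  {x | ∀ U ∈ 𝓝 (0 : X), ∃ k : ℕ, 1 ≤ k ∧ ∃ c : ℕ → X, c 0 = x ∧ c k = x ∧
    ∀ j < k, T (c j) - c (j + 1) ∈ U}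

/-- `T` has the periodic shadowing property: every periodic `U`-pseudotrajectory is `V`-shadowed
by some periodic point of `T`. -/
def PeriodicShadowingProperty (T : X → X) : Prop :=
  ∀ V ∈ 𝓝 (0 : X), ∃ U ∈ 𝓝 (0 : X), ∀ (k : ℕ), 1 ≤ k → ∀ x : ℕ → X,
    (∀ j : ℕ, T (x j) - x (j + 1) ∈ U) → (∀ j : ℕ, x (j + k) = x j) →
    ∃ y ∈ PerSet T, ∀ j : ℕ, x j - T^[j] y ∈ V

/-- `T` has the strict periodic shadowing property: every `U`-pseudotrajectory which is periodic
with period `k` is `V`-shadowed by some point `y` with `T^[k] y = y`. -/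
def StrictPeriodicShadowingProperty (T : X → X) : Prop :=
  ∀ V ∈ 𝓝 (0 : X), ∃ U ∈ 𝓝 (0 : X), ∀ (k : ℕ), 1 ≤ k → ∀ x : ℕ → X,
    (∀ j : ℕ, T (x j) - x (j + 1) ∈ U) → (∀ j : ℕ, x (j + k) = x j) →
    ∃ y : X, T^[k] y = y ∧ ∀ j : ℕ, x j - T^[j] y ∈ V

/-- The restriction of `T` to the (invariant) subspace `Y` has the finite shadowing property,
expressed via relative neighborhoods of `0`. -/
def FiniteShadowingPropertyOn (T : X → X) (Y : Set X) : Prop :=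
  ∀ V ∈ 𝓝 (0 : X), ∃ U ∈ 𝓝 (0 : X), ∀ (k : ℕ), 1 ≤ k → ∀ x : ℕ → X,
    (∀ j ≤ k, x j ∈ Y) → (∀ j < k, T (x j) - x (j + 1) ∈ U) →
    ∃ y ∈ Y, ∀ j ≤ k, x j - T^[j] y ∈ V

/-- The restriction of `T` to the (invariant) subspace `Y` has the periodic shadowing property:
periodic pseudotrajectories lying in `Y` are shadowed by periodic points lying in `Y`. -/
def PeriodicShadowingPropertyOn (T : X → X) (Y : Set X) : Prop :=
  ∀ V ∈ 𝓝 (0 : X), ∃ U ∈ 𝓝 (0 : X), ∀ (k : ℕ), 1 ≤ k → ∀ x : ℕ → X,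
    (∀ j : ℕ, x j ∈ Y) →
    (∀ j : ℕ, T (x j) - x (j + 1) ∈ U) → (∀ j : ℕ, x (j + k) = x j) →
    ∃ y ∈ PerSet T ∩ Y, ∀ j : ℕ, x j - T^[j] y ∈ V

/-- The restriction of `T` to the (invariant) subspace `Y` has the strict periodic shadowing
property. -/
def StrictPeriodicShadowingPropertyOn (T : X → X) (Y : Set X) : Prop :=
  ∀ V ∈ 𝓝 (0 : X), ∃ U ∈ 𝓝 (0 : X), ∀ (k : ℕ), 1 ≤ k → ∀ x : ℕ → X,
    (∀ j : ℕ, x j ∈ Y) →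
    (∀ j : ℕ, T (x j) - x (j + 1) ∈ U) → (∀ j : ℕ, x (j + k) = x j) →
    ∃ y ∈ Y, T^[k] y = y ∧ ∀ j : ℕ, x j - T^[j] y ∈ V

/-- The restriction of `T` to `Y` is topologically transitive (for the subspace topology on
`Y`): relatively open nonempty subsets of `Y` are of the form `A ∩ Y`, `A` open in `X`. -/
def TopologicallyTransitiveOn (T : X → X) (Y : Set X) : Prop :=
  ∀ A B : Set X, IsOpen A → IsOpen B → (A ∩ Y).Nonempty → (B ∩ Y).Nonempty →
    ∃ n : ℕ, ∃ x ∈ A ∩ Y, T^[n] x ∈ B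

/-- The restriction of `T` to `Y` is topologically mixing (for the subspace topology on `Y`). -/
def TopologicallyMixingOn (T : X → X) (Y : Set X) : Prop :=
  ∀ A B : Set X, IsOpen A → IsOpen B → (A ∩ Y).Nonempty → (B ∩ Y).Nonempty →
    ∃ n₀ : ℕ, ∀ n ≥ n₀, ∃ x ∈ A ∩ Y, T^[n] x ∈ B

/-- The restriction of `T` to `Y` is Devaney chaotic: it is topologically transitive and its
set of periodic points (namely `Per(T) ∩ Y`) is dense in `Y`. -/
def DevaneyChaoticOn (T : X → X) (Y : Set X) : Prop :=
  TopologicallyTransitiveOn T Y ∧ Y ⊆ closure (PerSet T ∩ Y)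

end Defs


section Helpers

variable {X : Type*} [AddCommGroup X] [TopologicalSpace X]

lemma perSet_subset_crSet (f : X → X) : PerSet f ⊆ CRSet f := by
  rintro y ⟨k, hk, hky⟩ U hU
  refine ⟨k, hk, fun j => f^[j] y, rfl, hky, fun j _ => ?_⟩
  have : f (f^[j] y) - f^[j+1] y = 0 := by
    rw [Function.iterate_succ_apply', sub_self]
  rw [this]
  exact mem_of_mem_nhds hU

lemma chain_concat (f : X → X) {U : Set X} {L₁ L₂ : ℕ} {b c' : X}
    (d₁ d₂ : ℕ → X) (h₁L : d₁ L₁ = b)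
    (e₁ : ∀ j < L₁, f (d₁ j) - d₁ (j+1) ∈ U)
    (h₂0 : d₂ 0 = b) (h₂L : d₂ L₂ = c')
    (e₂ : ∀ j < L₂, f (d₂ j) - d₂ (j+1) ∈ U) :
    ∃ d : ℕ → X, (∀ j ≤ L₁, d j = d₁ j) ∧ d (L₁ + L₂) = c' ∧
      ∀ j < L₁ + L₂, f (d j) - d (j+1) ∈ U := by
  refine ⟨fun j => if j < L₁ then d₁ j else d₂ (j - L₁), ?_, ?_, ?_⟩
  · intro j hj
    by_cases h : j < L₁
    · simp [h]
    · have hjL : j = L₁ := le_antisymm hj (not_lt.mp h)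
      subst hjL
      simp [h₁L, h₂0]
  · have h : ¬ (L₁ + L₂ < L₁) := by omega
    simp only [h, if_neg, if_false]
    rw [Nat.add_sub_cancel_left, h₂L]
  · intro j hj
    by_cases h : j < L₁
    · by_cases h' : j + 1 < L₁
      · simpa only [if_pos h, if_pos h'] using e₁ j h
      · have hj1 : j + 1 = L₁ := by omega
        have hd : d₂ (j + 1 - L₁) = d₁ (j + 1) := by
          rw [hj1, Nat.sub_self, h₂0, h₁L]
        simp only [if_pos h, if_neg h']
        rw [hd]
        exact e₁ j h
    · have h1 : ¬ (j + 1 < L₁) := by omega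
      have h2 : j + 1 - L₁ = (j - L₁) + 1 := by omega
      simp only [if_neg h, if_neg h1, h2]
      exact e₂ (j - L₁) (by omega)

lemma chain_periodize (f : X → X) {U : Set X} {K : ℕ} (hK : 1 ≤ K) (c : ℕ → X)
    (hcK : c K = c 0) (herr : ∀ j < K, f (c j) - c (j+1) ∈ U) :
    (∀ j, f (c (j % K)) - c ((j+1) % K) ∈ U) ∧ (∀ j, c ((j + K) % K) = c (j % K)) := by
  constructor
  · intro j
    have hr : j % K < K := Nat.mod_lt _ hK
    have key : (j+1) % K = (j % K + 1) % K := by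
      conv_lhs => rw [← Nat.div_add_mod j K, Nat.add_assoc,
        Nat.add_comm (K * (j / K)), Nat.add_mul_mod_self_left]
    by_cases h : j % K + 1 = K
    · have h2 : (j % K + 1) % K = 0 := by rw [h, Nat.mod_self]
      rw [key, h2]
      have h3 := herr (j % K) hr
      rwa [h, hcK] at h3
    · have h2 : (j % K + 1) % K = j % K + 1 := Nat.mod_eq_of_lt (by omega)
      rw [key, h2]
      exact herr _ hr
  · intro j
    rw [Nat.add_mod_right]

end Helpers

section Helpers2

variable {𝕂 : Type*} [RCLike 𝕂] {X : Type*} [AddCommGroup X] [Module 𝕂 X]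
    [TopologicalSpace X] [IsTopologicalAddGroup X] [ContinuousSMul 𝕂 X]

lemma chain_block (T : X →L[𝕂] X) {U' U : Set X} (hbal : Balanced 𝕂 U')
    (hUU : ∀ v ∈ U', ∀ w ∈ U', v + w ∈ U) (h0 : (0:X) ∈ U')
    {a : X} {N : ℕ} (hN : 1 ≤ N) (c : ℕ → X) (hcN : c N = a)
    (herr : ∀ j < N, T (c j) - c (j+1) ∈ U') (lam mu : 𝕂) (hlam : ‖lam‖ ≤ 1)
    (hdiff : (lam - mu) • a ∈ U') :
    ∃ d : ℕ → X, d 0 = lam • c 0 ∧ d N = mu • a ∧ ∀ j < N, T (d j) - d (j+1) ∈ U := by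
  refine ⟨fun j => if j = N then mu • a else lam • c j, ?_, ?_, ?_⟩
  · simp only [if_neg (by omega : ¬ (0:ℕ) = N)]
  · simp
  · intro j hj
    simp only [if_neg (by omega : ¬ j = N)]
    by_cases h : j + 1 = N
    · rw [if_pos h]
      have key : T (lam • c j) - mu • a =
          lam • (T (c j) - c (j+1)) + (lam - mu) • a := by
        rw [map_smul, smul_sub, sub_smul, h, hcN]
        abel
      rw [key]
      exact hUU _ (hbal.smul_mem hlam (herr j hj)) _ hdiff
    · rw [if_neg h]
      have key : T (lam • c j) - lam • c (j+1) = lam • (T (c j) - c (j+1)) + 0 := by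
        rw [map_smul, smul_sub, add_zero]
      rw [key]
      exact hUU _ (hbal.smul_mem hlam (herr j hj)) _ h0

lemma inv_nat_smul_tendsto (a : X) :
    Filter.Tendsto (fun M : ℕ => ((M : 𝕂))⁻¹ • a) Filter.atTop (𝓝 (0 : X)) := by
  have h1 : Filter.Tendsto (fun M : ℕ => ((M : 𝕂))⁻¹) Filter.atTop (𝓝 (0 : 𝕂)) := by
    rw [tendsto_zero_iff_norm_tendsto_zero]
    have : (fun M : ℕ => ‖((M : 𝕂))⁻¹‖) = fun M : ℕ => ((M : ℝ))⁻¹ := by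
      funext M
      rw [norm_inv, RCLike.norm_natCast]
    rw [this]
    exact tendsto_inv_atTop_zero.comp tendsto_natCast_atTop_atTop
  simpa using h1.smul_const a

lemma chain_to_zero (T : X →L[𝕂] X) {a : X} (ha : a ∈ CRSet (⇑T)) {U : Set X}
    (hU : U ∈ 𝓝 (0:X)) :
    ∃ L, ∃ d : ℕ → X, d 0 = a ∧ d L = 0 ∧ ∀ j < L, T (d j) - d (j+1) ∈ U := by
  obtain ⟨W, hW, hWU⟩ := exists_nhds_zero_half hU
  obtain ⟨U', ⟨hU', hbal⟩, hU'W⟩ := (nhds_basis_balanced 𝕂 X).mem_iff.mp hW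
  have hUU : ∀ v ∈ U', ∀ w ∈ U', v + w ∈ U := fun v hv w hw => hWU v (hU'W hv) w (hU'W hw)
  have h0 : (0:X) ∈ U' := mem_of_mem_nhds hU'
  obtain ⟨N, hN, c, hc0, hcN, herr⟩ := ha U' hU'
  have hM : ∀ᶠ M : ℕ in Filter.atTop, ((M : 𝕂))⁻¹ • a ∈ U' :=
    (inv_nat_smul_tendsto a).eventually_mem hU'
  obtain ⟨M, hMa, hM1⟩ := (hM.and (Filter.eventually_ge_atTop 1)).exists
  have hMne : ((M : ℕ) : 𝕂) ≠ 0 := Nat.cast_ne_zero.mpr (by omega)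
  have key : ∀ m, m ≤ M → ∃ L, ∃ d : ℕ → X,
      d 0 = (((m : ℕ) : 𝕂) / ((M : ℕ) : 𝕂)) • a ∧ d L = 0 ∧
      ∀ j < L, T (d j) - d (j+1) ∈ U := by
    intro m
    induction m with
    | zero =>
      intro _
      exact ⟨0, fun _ => 0, by simp, rfl, fun j hj => absurd hj (by omega)⟩
    | succ m ih =>
      intro hm
      obtain ⟨L, d₂, hd₂0, hd₂L, e₂⟩ := ih (by omega)
      have hlam : ‖(((m+1 : ℕ) : 𝕂) / ((M : ℕ) : 𝕂))‖ ≤ 1 := by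
        rw [norm_div, RCLike.norm_natCast, RCLike.norm_natCast, div_le_one (by positivity)]
        exact_mod_cast hm
      have hdiff : ((((m+1 : ℕ) : 𝕂) / ((M : ℕ) : 𝕂)) - (((m : ℕ) : 𝕂) / ((M : ℕ) : 𝕂))) • a
          ∈ U' := by
        have : (((m+1 : ℕ) : 𝕂) / ((M : ℕ) : 𝕂)) - (((m : ℕ) : 𝕂) / ((M : ℕ) : 𝕂))
            = ((M : ℕ) : 𝕂)⁻¹ := by
          rw [div_sub_div_same]
          push_cast
          rw [add_sub_cancel_left, one_div]
        rw [this]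
        exact hMa
      obtain ⟨d₁, hd₁0, hd₁N, e₁⟩ := chain_block T hbal hUU h0 hN c hcN herr
        _ _ hlam hdiff
      rw [hc0] at hd₁0
      obtain ⟨d, hag, hend, e⟩ := chain_concat (⇑T) d₁ d₂ (hd₁N.trans hd₂0.symm) e₁ rfl hd₂L e₂
      exact ⟨N + L, d, by rw [hag 0 (by omega), hd₁0], hend, e⟩
  obtain ⟨L, d, hd0, hdL, e⟩ := key M le_rfl
  rw [div_self hMne, one_smul] at hd0
  exact ⟨L, d, hd0, hdL, e⟩

lemma chain_from_zero (T : X →L[𝕂] X) {a : X} (ha : a ∈ CRSet (⇑T)) {U : Set X}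
    (hU : U ∈ 𝓝 (0:X)) :
    ∃ L, ∃ d : ℕ → X, d 0 = 0 ∧ d L = a ∧ ∀ j < L, T (d j) - d (j+1) ∈ U := by
  obtain ⟨W, hW, hWU⟩ := exists_nhds_zero_half hU
  obtain ⟨U', ⟨hU', hbal⟩, hU'W⟩ := (nhds_basis_balanced 𝕂 X).mem_iff.mp hW
  have hUU : ∀ v ∈ U', ∀ w ∈ U', v + w ∈ U := fun v hv w hw => hWU v (hU'W hv) w (hU'W hw)
  have h0 : (0:X) ∈ U' := mem_of_mem_nhds hU'
  obtain ⟨N, hN, c, hc0, hcN, herr⟩ := ha U' hU'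
  have hM : ∀ᶠ M : ℕ in Filter.atTop, ((M : 𝕂))⁻¹ • a ∈ U' :=
    (inv_nat_smul_tendsto a).eventually_mem hU'
  obtain ⟨M, hMa, hM1⟩ := (hM.and (Filter.eventually_ge_atTop 1)).exists
  have hMne : ((M : ℕ) : 𝕂) ≠ 0 := Nat.cast_ne_zero.mpr (by omega)
  have key : ∀ m, m ≤ M → ∃ L, ∃ d : ℕ → X,
      d 0 = 0 ∧ d L = (((m : ℕ) : 𝕂) / ((M : ℕ) : 𝕂)) • a ∧
      ∀ j < L, T (d j) - d (j+1) ∈ U := by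
    intro m
    induction m with
    | zero =>
      intro _
      exact ⟨0, fun _ => 0, rfl, by simp, fun j hj => absurd hj (by omega)⟩
    | succ m ih =>
      intro hm
      obtain ⟨L, d₂, hd₂0, hd₂L, e₂⟩ := ih (by omega)
      have hlam : ‖(((m : ℕ) : 𝕂) / ((M : ℕ) : 𝕂))‖ ≤ 1 := by
        rw [norm_div, RCLike.norm_natCast, RCLike.norm_natCast, div_le_one (by positivity)]
        exact_mod_cast (by omega : m ≤ M)
      have hdiff : ((((m : ℕ) : 𝕂) / ((M : ℕ) : 𝕂)) - (((m+1 : ℕ) : 𝕂) / ((M : ℕ) : 𝕂))) • a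
          ∈ U' := by
        have : ((((m : ℕ) : 𝕂) / ((M : ℕ) : 𝕂)) - (((m+1 : ℕ) : 𝕂) / ((M : ℕ) : 𝕂))) • a
            = (-1 : 𝕂) • (((M : ℕ) : 𝕂)⁻¹ • a) := by
          rw [smul_smul]
          congr 1
          rw [div_sub_div_same]
          push_cast
          ring
        rw [this]
        exact hbal.smul_mem (by simp) hMa
      obtain ⟨d₁, hd₁0, hd₁N, e₁⟩ := chain_block T hbal hUU h0 hN c hcN herr
        _ _ hlam hdiff
      rw [hc0] at hd₁0
      obtain ⟨d, hag, hend, e⟩ := chain_concat (⇑T) d₂ d₁ hd₂L e₂ hd₁0 hd₁N e₁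
      exact ⟨L + N, d, by rw [hag 0 (by omega), hd₂0], hend, e⟩
  obtain ⟨L, d, hd0, hdL, e⟩ := key M le_rfl
  rw [div_self hMne, one_smul] at hdL
  exact ⟨L, d, hd0, hdL, e⟩

lemma chain_exact (T : X →L[𝕂] X) {a b : X} (ha : a ∈ CRSet (⇑T)) (hb : b ∈ CRSet (⇑T))
    {U : Set X} (hU : U ∈ 𝓝 (0:X)) :
    ∃ n₀, ∀ n ≥ n₀, ∃ d : ℕ → X, d 0 = a ∧ d n = b ∧ ∀ j < n, T (d j) - d (j+1) ∈ U := by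
  obtain ⟨L₁, d₁, h₁0, h₁L, e₁⟩ := chain_to_zero T ha hU
  obtain ⟨L₂, d₂, h₂0, h₂L, e₂⟩ := chain_from_zero T hb hU
  have h0U : (0:X) ∈ U := mem_of_mem_nhds hU
  refine ⟨L₁ + L₂, fun n hn => ?_⟩
  set p := n - (L₁ + L₂) with hp
  have ez : ∀ j < p, T ((fun _ => (0:X)) j) - (fun _ => (0:X)) (j+1) ∈ U := by
    intro j _
    simpa using h0U
  obtain ⟨e, heag, heL, ee⟩ := chain_concat (⇑T) d₁ (fun _ => (0:X)) h₁L e₁ rfl rfl ez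
  obtain ⟨d, hag, hend, ed⟩ := chain_concat (⇑T) e d₂ heL ee h₂0 h₂L e₂
  have hlen : L₁ + p + L₂ = n := by omega
  refine ⟨d, ?_, by rwa [hlen] at hend, fun j hj => ed j (by omega)⟩
  rw [hag 0 (by omega), heag 0 (by omega), h₁0]


lemma crSet_isClosed (T : X →L[𝕂] X) : IsClosed (CRSet (⇑T)) := by
  refine isClosed_of_closure_subset ?_
  intro x hx U hU
  obtain ⟨W1, hW1, hW1U⟩ := exists_nhds_zero_half hU
  obtain ⟨W, hW, hWW⟩ := exists_nhds_zero_half hW1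
  have h0W : (0:X) ∈ W := mem_of_mem_nhds hW
  have hWsub : W ⊆ W1 := fun w hw => by simpa using hWW 0 h0W w hw
  have hadd : ∀ u ∈ W, ∀ v ∈ W, ∀ w ∈ W, u + v + w ∈ U := fun u hu v hv w hw =>
    hW1U _ (hWW u hu v hv) _ (hWsub hw)
  -- find x' ∈ CRSet close to x
  have ht1 : {v : X | v - x ∈ W} ∈ 𝓝 x := by
    have : Continuous fun v : X => v - x := continuous_id.sub continuous_const
    have h := this.continuousAt (x := x)
    apply h.preimage_mem_nhds
    simpa using hW
  have ht2 : {v : X | T (x - v) ∈ W} ∈ 𝓝 x := by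
    have : Continuous fun v : X => T (x - v) :=
      T.continuous.comp (continuous_const.sub continuous_id)
    have h := this.continuousAt (x := x)
    apply h.preimage_mem_nhds
    simpa using hW
  obtain ⟨x', hx't, hx'CR⟩ := mem_closure_iff_nhds.mp hx _ (Filter.inter_mem ht1 ht2)
  obtain ⟨hx'W, hTxW⟩ := hx't
  obtain ⟨k, hk, c, hc0, hck, herr⟩ := hx'CR W hW
  refine ⟨k, hk, fun j => if j % k = 0 then x else c j, by simp, ?_, ?_⟩
  · simp [Nat.mod_self]
  · intro j hj
    have hjk : j % k = j := Nat.mod_eq_of_lt hj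
    have key : T ((if j % k = 0 then x else c j)) - (if (j+1) % k = 0 then x else c (j+1)) =
        T ((if j % k = 0 then x else c j) - c j) + (T (c j) - c (j+1)) +
          (c (j+1) - (if (j+1) % k = 0 then x else c (j+1))) := by
      rw [map_sub]
      abel
    rw [key]
    refine hadd _ ?_ _ (herr j hj) _ ?_
    · by_cases h : j = 0
      · subst h
        simp only [Nat.zero_mod, if_pos rfl, hc0]
        exact hTxW
      · rw [hjk, if_neg h, sub_self, map_zero]
        exact h0W
    · by_cases h : j + 1 = k
      · have : (j+1) % k = 0 := by rw [h, Nat.mod_self]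
        rw [if_pos this, h, hck]
        exact hx'W
      · have hlt : j + 1 < k := by omega
        rw [if_neg (by rw [Nat.mod_eq_of_lt hlt]; omega), sub_self]
        exact h0W

lemma crSet_invariant (T : X →L[𝕂] X) {x : X} (hx : x ∈ CRSet (⇑T)) :
    T x ∈ CRSet (⇑T) := by
  intro U hU
  have hS : (⇑T) ⁻¹' U ∈ 𝓝 (0:X) := by
    have h := T.continuous.continuousAt (x := (0:X))
    apply h.preimage_mem_nhds
    simpa using hU
  obtain ⟨k, hk, c, hc0, hck, herr⟩ := hx _ hS
  refine ⟨k, hk, fun j => T (c j), by simp only [hc0], by simp only [hck], fun j hj => ?_⟩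
  have h := herr j hj
  simp only [Set.mem_preimage, map_sub] at h
  exact h

end Helpers2

/-- Let `X` be a topological vector space over `ℝ` or `ℂ` and let `T` be a continuous linear
operator on `X` with the periodic shadowing property. Then: (a) `Per(T)` is dense in `CR(T)`;
(b) `CR(T)` is a closed `T`-invariant subspace and the restriction `T|_{CR(T)}` has the finite
shadowing property and the periodic shadowing property; (c) `T|_{CR(T)}` is topologically mixing
and Devaney chaotic. Moreover, if `T` has the strict periodic shadowing property, then
`T|_{CR(T)}` has the strict periodic shadowing property. -/
theorem periodicShadowing_chainRecurrent
    {𝕂 : Type*} [RCLike 𝕂] {X : Type*} [AddCommGroup X] [Module 𝕂 X]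
    [TopologicalSpace X] [IsTopologicalAddGroup X] [ContinuousSMul 𝕂 X]
    (T : X →L[𝕂] X) (hT : PeriodicShadowingProperty (⇑T)) :
    CRSet (⇑T) ⊆ closure (PerSet (⇑T)) ∧
    (IsClosed (CRSet (⇑T)) ∧ (∀ x ∈ CRSet (⇑T), T x ∈ CRSet (⇑T))) ∧
    FiniteShadowingPropertyOn (⇑T) (CRSet (⇑T)) ∧
    PeriodicShadowingPropertyOn (⇑T) (CRSet (⇑T)) ∧
    TopologicallyMixingOn (⇑T) (CRSet (⇑T)) ∧
    DevaneyChaoticOn (⇑T) (CRSet (⇑T)) ∧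
    (StrictPeriodicShadowingProperty (⇑T) →
      StrictPeriodicShadowingPropertyOn (⇑T) (CRSet (⇑T))) := by
  have hPer : PerSet (⇑T) ⊆ CRSet (⇑T) := perSet_subset_crSet (⇑T)
  -- (a) density of periodic points in CR
  have hDense : CRSet (⇑T) ⊆ closure (PerSet (⇑T)) := by
    intro x hx
    rw [mem_closure_iff_nhds]
    intro t ht
    have hV : (fun v : X => x - v) ⁻¹' t ∈ 𝓝 (0:X) := by
      have hc : Continuous fun v : X => x - v := continuous_const.sub continuous_id
      apply (hc.continuousAt (x := (0:X))).preimage_mem_nhds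
      simpa using ht
    obtain ⟨U, hU, hshad⟩ := hT _ hV
    obtain ⟨k, hk, c, hc0, hck, herr⟩ := hx U hU
    obtain ⟨eper, hper⟩ := chain_periodize (⇑T) hk c (hck.trans hc0.symm) herr
    obtain ⟨y, hyPer, hsh⟩ := hshad k hk (fun j => c (j % k)) eper hper
    have h0 : c (0 % k) - T^[0] y ∈ (fun v : X => x - v) ⁻¹' t := hsh 0
    refine ⟨y, ?_, hyPer⟩
    simpa [hc0] using h0
  -- mixing
  have hMix : TopologicallyMixingOn (⇑T) (CRSet (⇑T)) := by
    intro A B hA hB hAne hBne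
    obtain ⟨a, haA, haCR⟩ := hAne
    obtain ⟨b, hbB, hbCR⟩ := hBne
    have hVA : (fun v : X => a - v) ⁻¹' A ∈ 𝓝 (0:X) := by
      have hc : Continuous fun v : X => a - v := continuous_const.sub continuous_id
      apply (hc.continuousAt (x := (0:X))).preimage_mem_nhds
      simpa using hA.mem_nhds haA
    have hVB : (fun v : X => b - v) ⁻¹' B ∈ 𝓝 (0:X) := by
      have hc : Continuous fun v : X => b - v := continuous_const.sub continuous_id
      apply (hc.continuousAt (x := (0:X))).preimage_mem_nhds
      simpa using hB.mem_nhds hbB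
    obtain ⟨U, hU, hshad⟩ := hT _ (Filter.inter_mem hVA hVB)
    obtain ⟨n₀, hab⟩ := chain_exact T haCR hbCR hU
    obtain ⟨m₀, hba⟩ := chain_exact T hbCR haCR hU
    refine ⟨n₀, fun n hn => ?_⟩
    obtain ⟨d₁, hd₁0, hd₁n, e₁⟩ := hab n hn
    obtain ⟨d₂, hd₂0, hd₂m, e₂⟩ := hba (m₀+1) (Nat.le_succ _)
    obtain ⟨c, hag, hend, ec⟩ := chain_concat (⇑T) d₁ d₂ hd₁n e₁ hd₂0 hd₂m e₂
    have hK : 1 ≤ n + (m₀ + 1) := by omega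
    have hcyc : c (n + (m₀+1)) = c 0 := by rw [hend, hag 0 (by omega), hd₁0]
    obtain ⟨eper, hper⟩ := chain_periodize (⇑T) hK c hcyc ec
    obtain ⟨y, hyPer, hsh⟩ := hshad _ hK (fun j => c (j % (n + (m₀+1)))) eper hper
    have h0 : c (0 % (n + (m₀+1))) - T^[0] y ∈ _ := hsh 0
    have hn' : c (n % (n + (m₀+1))) - T^[n] y ∈ _ := hsh n
    rw [Nat.zero_mod, hag 0 (by omega), hd₁0] at h0
    rw [Nat.mod_eq_of_lt (by omega), hag n le_rfl, hd₁n] at hn'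
    refine ⟨y, ⟨?_, hPer hyPer⟩, ?_⟩
    · simpa using h0.1
    · simpa using hn'.2
  -- transitive
  have hTrans : TopologicallyTransitiveOn (⇑T) (CRSet (⇑T)) := by
    intro A B hA hB hAne hBne
    obtain ⟨n₀, h⟩ := hMix A B hA hB hAne hBne
    obtain ⟨x, hx1, hx2⟩ := h n₀ le_rfl
    exact ⟨n₀, x, hx1, hx2⟩
  refine ⟨hDense, ⟨crSet_isClosed T, fun x hx => crSet_invariant T hx⟩, ?_, ?_, hMix, ⟨hTrans, ?_⟩, ?_⟩
  · -- finite shadowing on CR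
    intro V hV
    obtain ⟨U, hU, hshad⟩ := hT V hV
    refine ⟨U, hU, fun k hk x hxCR herr => ?_⟩
    obtain ⟨n₀, hch⟩ := chain_exact T (hxCR k le_rfl) (hxCR 0 (Nat.zero_le _)) hU
    obtain ⟨d₂, hd₂0, hd₂L, e₂⟩ := hch (n₀+1) (Nat.le_succ _)
    obtain ⟨c, hag, hend, ec⟩ := chain_concat (⇑T) x d₂ rfl herr hd₂0 hd₂L e₂
    have hK : 1 ≤ k + (n₀ + 1) := by omega
    have hcyc : c (k + (n₀+1)) = c 0 := by rw [hend, hag 0 (by omega)]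
    obtain ⟨eper, hper⟩ := chain_periodize (⇑T) hK c hcyc ec
    obtain ⟨y, hyPer, hsh⟩ := hshad _ hK (fun j => c (j % (k + (n₀+1)))) eper hper
    refine ⟨y, hPer hyPer, fun j hj => ?_⟩
    have h : c (j % (k + (n₀+1))) - T^[j] y ∈ V := hsh j
    rwa [Nat.mod_eq_of_lt (by omega), hag j hj] at h
  · -- periodic shadowing on CR
    intro V hV
    obtain ⟨U, hU, hshad⟩ := hT V hV
    refine ⟨U, hU, fun k hk x _ herr hper => ?_⟩
    obtain ⟨y, hy, hs⟩ := hshad k hk x herr hper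
    exact ⟨y, ⟨hy, hPer hy⟩, hs⟩
  · -- dense periodic points in CR
    rw [Set.inter_eq_left.mpr hPer]
    exact hDense
  · -- strict
    intro hS V hV
    obtain ⟨U, hU, hshad⟩ := hS V hV
    refine ⟨U, hU, fun k hk x _ herr hper => ?_⟩
    obtain ⟨y, hyk, hs⟩ := hshad k hk x herr hper
    exact ⟨y, hPer ⟨k, hk, hyk⟩, hyk, hs⟩
end

section
/- Suppose that the topology of a locally convex space X is induced by a directed family (‖·‖_α)_{α∈I} of complete seminorms. If T ∈ GL(X) is generalized hyperbolic and T(Ker(‖·‖_α)) = Ker(‖·‖_α) for all α ∈ I, then T has the shadowing property. -/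
open Filter Topology Set

/-- The seminorm `q` is complete: every Cauchy sequence with respect to `q` has a limit with
respect to `q`. -/
def CompleteSeminorm {𝕂 : Type*} [RCLike 𝕂] {X : Type*} [AddCommGroup X] [Module 𝕂 X]
    (q : Seminorm 𝕂 X) : Prop :=
  ∀ u : ℕ → X, (∀ ε > (0 : ℝ), ∃ n₀ : ℕ, ∀ m ≥ n₀, ∀ n ≥ n₀, q (u n - u m) < ε) →
    ∃ x : X, ∀ ε > (0 : ℝ), ∃ n₀ : ℕ, ∀ n ≥ n₀, q (u n - x) < ε

/-- An invertible operator `T ∈ GL(X)` is generalized hyperbolic: there is a topological direct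
sum decomposition `X = M ⊕ N` with `T(M) ⊆ M`, `T⁻¹(N) ⊆ N` and the exponential estimates (GH3),
where the seminorm family `p` induces the topology of `X`. -/
def IsGeneralizedHyperbolicInv {𝕂 : Type*} [RCLike 𝕂] {X : Type*} [AddCommGroup X] [Module 𝕂 X]
    [TopologicalSpace X] {I : Type*} (p : I → Seminorm 𝕂 X) (T : X ≃L[𝕂] X) : Prop :=
  ∃ (M N : Submodule 𝕂 X) (hMN : IsCompl M N),
    Continuous (fun x : X => (M.linearProjOfIsCompl N hMN x : X)) ∧
    (∀ y ∈ M, T y ∈ M) ∧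
    (∀ z ∈ N, T.symm z ∈ N) ∧
    ∀ α : I, ∃ β : I, ∃ c > (0 : ℝ), ∃ t ∈ Set.Ioo (0 : ℝ) 1,
      (∀ y ∈ M, ∀ n : ℕ, p α ((⇑T)^[n] y) ≤ c * t ^ n * p β y) ∧
      (∀ z ∈ N, ∀ n : ℕ, p α ((⇑T.symm)^[n] z) ≤ c * t ^ n * p β z)

/-- An invertible operator `T` has the (two-sided) shadowing property: for every neighborhood
`V` of `0` there is a neighborhood `U` of `0` such that every `U`-pseudotrajectory
`(x_j)_{j∈ℤ}` of `T` is `V`-shadowed by the full trajectory of some point `y`. -/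
def ShadowingProperty {𝕂 : Type*} [RCLike 𝕂] {X : Type*} [AddCommGroup X] [Module 𝕂 X]
    [TopologicalSpace X] (T : X ≃L[𝕂] X) : Prop :=
  ∀ V ∈ 𝓝 (0 : X), ∃ U ∈ 𝓝 (0 : X), ∀ x : ℤ → X,
    (∀ j : ℤ, T (x j) - x (j + 1) ∈ U) →
    ∃ y : X, ∀ j : ℤ, x j - (T ^ j) y ∈ V


section AuxShadow
variable {𝕂 : Type*} [RCLike 𝕂] {X : Type*} [AddCommGroup X] [Module 𝕂 X]

lemma seminormSumLe_aux (q : Seminorm 𝕂 X) (n : ℕ) (f : ℕ → X) :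
    q (∑ i ∈ Finset.range n, f i) ≤ ∑ i ∈ Finset.range n, q (f i) := by
  induction n with
  | zero => simp
  | succ n ih =>
    rw [Finset.sum_range_succ, Finset.sum_range_succ]
    exact (map_add_le_add q _ _).trans (add_le_add ih le_rfl)

lemma geomIcoLe_aux {t : ℝ} (h0 : 0 < t) (h1 : t < 1) {m n : ℕ} (hmn : m ≤ n) :
    ∑ k ∈ Finset.Ico m n, t ^ k ≤ t ^ m / (1 - t) := by
  have h2 : (1:ℝ) - t > 0 := by linarith
  rw [geom_sum_Ico (by linarith : t ≠ 1) hmn]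
  have he : (t ^ n - t ^ m) / (t - 1) = (t ^ m - t ^ n) / (1 - t) := by
    rw [show t - 1 = -(1-t) by ring, div_neg]; ring
  rw [he, div_le_div_iff₀ h2 h2]
  nlinarith [pow_nonneg h0.le n, pow_nonneg h0.le m]

lemma geomRangeLe_aux {t : ℝ} (h0 : 0 < t) (h1 : t < 1) (n : ℕ) :
    ∑ k ∈ Finset.range n, t ^ k ≤ 1 / (1 - t) := by
  rw [Finset.range_eq_Ico]
  have := geomIcoLe_aux h0 h1 (Nat.zero_le n)
  rwa [pow_zero] at this

lemma seminormTelescope_aux (q : Seminorm 𝕂 X) (u : ℕ → X) (b : ℕ → ℝ)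
    (h : ∀ k, q (u (k+1) - u k) ≤ b k) {m n : ℕ} (hmn : m ≤ n) :
    q (u n - u m) ≤ ∑ k ∈ Finset.Ico m n, b k := by
  induction n, hmn using Nat.le_induction with
  | base => simp
  | succ n hmn ih =>
    have e : u (n+1) - u m = (u (n+1) - u n) + (u n - u m) := by abel
    rw [e, Finset.sum_Ico_succ_top hmn]
    calc q ((u (n+1) - u n) + (u n - u m)) ≤ q (u (n+1) - u n) + q (u n - u m) :=
          map_add_le_add q _ _
      _ ≤ b n + ∑ k ∈ Finset.Ico m n, b k := add_le_add (h n) ih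
      _ = ∑ k ∈ Finset.Ico m n, b k + b n := add_comm _ _

lemma completeSeminormLimit_aux (q : Seminorm 𝕂 X)
    (hq : ∀ u : ℕ → X, (∀ ε > (0 : ℝ), ∃ n₀ : ℕ, ∀ m ≥ n₀, ∀ n ≥ n₀, q (u n - u m) < ε) →
      ∃ x : X, ∀ ε > (0 : ℝ), ∃ n₀ : ℕ, ∀ n ≥ n₀, q (u n - x) < ε)
    (u : ℕ → X) (a t : ℝ) (ha : 0 ≤ a) (ht0 : 0 < t) (ht1 : t < 1)
    (h : ∀ k, q (u (k+1) - u k) ≤ a * t ^ (k+1)) :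
    ∃ z : X, ∀ ε > (0:ℝ), ∃ n₀ : ℕ, ∀ n ≥ n₀, q (u n - z) < ε := by
  apply hq
  intro ε hε
  have hden : (0:ℝ) < 1 - t := by linarith
  obtain ⟨n₀, hn₀⟩ := exists_pow_lt_of_lt_one
    (show (0:ℝ) < ε * (1-t) / (a + 1) by positivity) ht1
  refine ⟨n₀, ?_⟩
  have key : ∀ m n, n₀ ≤ m → m ≤ n → q (u n - u m) < ε := by
    intro m n hm hmn
    have h1 : q (u n - u m) ≤ ∑ k ∈ Finset.Ico m n, a * t ^ (k+1) :=
      seminormTelescope_aux q u _ h hmn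
    have h2 : ∑ k ∈ Finset.Ico m n, a * t ^ (k+1) ≤ a * (t ^ m / (1-t)) := by
      have hterm : ∀ k ∈ Finset.Ico m n, a * t ^ (k+1) ≤ a * t ^ k := by
        intro k _
        have hpow : t ^ (k+1) ≤ t ^ k := by
          calc t^(k+1) = t^k * t := pow_succ t k
            _ ≤ t^k * 1 := by nlinarith [pow_nonneg ht0.le k]
            _ = t^k := mul_one _
        nlinarith
      calc ∑ k ∈ Finset.Ico m n, a * t^(k+1) ≤ ∑ k ∈ Finset.Ico m n, a * t^k :=
            Finset.sum_le_sum hterm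
        _ = a * ∑ k ∈ Finset.Ico m n, t^k := (Finset.mul_sum _ _ _).symm
        _ ≤ a * (t^m / (1-t)) := by
            have := geomIcoLe_aux ht0 ht1 hmn
            nlinarith
    have h3 : t ^ m ≤ t ^ n₀ := pow_le_pow_of_le_one ht0.le ht1.le hm
    have hn₀' : t ^ n₀ * (a + 1) < ε * (1 - t) :=
      (lt_div_iff₀ (by positivity : (0:ℝ) < a + 1)).mp hn₀
    have h5 : a * t ^ m < ε * (1 - t) := by
      nlinarith [pow_nonneg ht0.le m, pow_nonneg ht0.le n₀]
    have h6 : a * (t ^ m / (1-t)) < ε := by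
      rw [mul_div_assoc'] at *
      rw [div_lt_iff₀ hden]
      linarith
    linarith
  intro m hm n hn
  rcases le_total m n with hmn | hnm
  · exact key m n hm hmn
  · rw [map_sub_rev]; exact key n m hn hnm

end AuxShadow


set_option maxHeartbeats 2000000 in
/-- Suppose that the topology of the locally convex space `X` is induced by a directed family
`p` of complete seminorms. If `T ∈ GL(X)` is generalized hyperbolic and
`T(Ker(p α)) = Ker(p α)` for every `α`, then `T` has the shadowing property. -/
theorem generalizedHyperbolic_shadowing_of_completeSeminorms
    {𝕂 : Type*} [RCLike 𝕂] {X : Type*} [AddCommGroup X] [Module 𝕂 X]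
    [TopologicalSpace X] [IsTopologicalAddGroup X] [ContinuousSMul 𝕂 X]
    {I : Type*} [Nonempty I] (p : I → Seminorm 𝕂 X) (hp : WithSeminorms p)
    (hdir : ∀ α β : I, ∃ γ : I, p α ≤ p γ ∧ p β ≤ p γ)
    (hcomplete : ∀ α : I, CompleteSeminorm (p α))
    (T : X ≃L[𝕂] X) (hT : IsGeneralizedHyperbolicInv p T)
    (hker : ∀ α : I, ⇑T '' {x : X | p α x = 0} = {x : X | p α x = 0}) :
    ShadowingProperty T := by
  classical
  intro V hV
  -- dominating index for any finset
  have hdom : ∀ s : Finset I, ∃ γ : I, ∀ i ∈ s, p i ≤ p γ := by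
    intro s
    induction s using Finset.induction_on with
    | empty => exact ⟨Classical.arbitrary I, by simp⟩
    | @insert a s ha ih =>
      obtain ⟨γ₀, hγ₀⟩ := ih
      obtain ⟨γ, h1, h2⟩ := hdir a γ₀
      exact ⟨γ, by
        intro i hi
        rcases Finset.mem_insert.mp hi with rfl | hi
        · exact h1
        · exact (hγ₀ i hi).trans h2⟩
  -- a single-seminorm ball inside V
  obtain ⟨W, hW, hWV⟩ := hp.hasBasis.mem_iff.mp hV
  obtain ⟨s, ε, hε, rfl⟩ := (SeminormFamily.basisSets_iff p).mp hW
  obtain ⟨α, hα⟩ := hdom s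
  have hball : Seminorm.ball (p α) 0 ε ⊆ V := by
    intro u hu
    apply hWV
    simp only [id]
    rw [Seminorm.mem_ball_zero] at hu ⊢
    exact lt_of_le_of_lt (Finset.sup_le (f := p) hα u) hu
  -- generalized hyperbolicity data
  obtain ⟨M, N, hMN, hcontP, hTM, hTN, hGH⟩ := hT
  obtain ⟨β, c, hc, t, ⟨ht0, ht1⟩, hMe, hNe⟩ := hGH α
  set πl : X →ₗ[𝕂] X := M.subtype.comp (M.linearProjOfIsCompl N hMN) with hπl
  have hπcont : Continuous fun u : X => πl u := hcontP
  -- bounds for continuous seminorms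
  have hbnd : ∀ q : Seminorm 𝕂 X, Continuous q →
      ∃ C : ℝ, 0 < C ∧ ∃ μ : I, ∀ u : X, q u ≤ C * p μ u := by
    intro q hq
    obtain ⟨s', C, hC0, hle⟩ := Seminorm.bound_of_continuous hp q hq
    obtain ⟨μ, hμ⟩ := hdom s'
    have hCR : (0:ℝ) < C := by exact_mod_cast zero_lt_iff.mpr hC0
    refine ⟨(C : ℝ), hCR, μ, fun u => ?_⟩
    have h1 : q u ≤ (C : ℝ) * (s'.sup p) u := by
      have := hle u
      simpa [NNReal.smul_def] using this
    have h2 : (s'.sup p) u ≤ p μ u := Finset.sup_le (f := p) hμ u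
    nlinarith [apply_nonneg (s'.sup p) u]
  -- bound for p α ∘ T
  obtain ⟨C₁, hC₁, α₁, hα₁⟩ := hbnd ((p α).comp (T : X →L[𝕂] X).toLinearMap)
    (by exact (hp.continuous_seminorm α).comp T.continuous)
  have hα₁' : ∀ u : X, p α (T u) ≤ C₁ * p α₁ u := fun u => hα₁ u
  -- bounds for projections
  have hprojbnd : ∀ β' : I, ∃ C : ℝ, 0 < C ∧ ∃ μ : I, ∀ u : X, p β' (πl u) ≤ C * p μ u := by
    intro β'
    obtain ⟨C, hC, μ, h⟩ := hbnd ((p β').comp πl)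
      (by exact (hp.continuous_seminorm β').comp hπcont)
    exact ⟨C, hC, μ, fun u => h u⟩
  -- dominating seminorm γ for the limits
  obtain ⟨γ, hγα, hγα₁⟩ := hdir α α₁
  obtain ⟨βγ, cγ, hcγ, tγ, ⟨htγ0, htγ1⟩, hMeγ, hNeγ⟩ := hGH γ
  obtain ⟨Cp, hCp, μ₁, hμ₁⟩ := hprojbnd β
  obtain ⟨Cpγ, hCpγ, μ₂, hμ₂⟩ := hprojbnd βγ
  obtain ⟨μ', hμ'a, hμ'b⟩ := hdir β μ₁
  obtain ⟨μ'', hμ''a, hμ''b⟩ := hdir βγ μ₂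
  obtain ⟨μ, hμa, hμb⟩ := hdir μ' μ''
  have hpβμ : p β ≤ p μ := hμ'a.trans hμa
  have hpμ₁μ : p μ₁ ≤ p μ := hμ'b.trans hμa
  have hpβγμ : p βγ ≤ p μ := hμ''a.trans hμb
  have hpμ₂μ : p μ₂ ≤ p μ := hμ''b.trans hμb
  -- the radius δ
  have h1t : (0:ℝ) < 1 - t := by linarith
  set δ : ℝ := ε * (1 - t) / (2*c*(Cp+1) + 1) with hδdef
  have hδ : 0 < δ := by positivity
  refine ⟨Seminorm.ball (p μ) 0 δ, hp.hasBasis.mem_iff.mpr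
    ⟨Seminorm.ball (p μ) 0 δ, SeminormFamily.basisSets_singleton_mem p μ hδ, by simp⟩, ?_⟩
  intro x hx
  -- errors and their components
  set e : ℤ → X := fun j => T (x j) - x (j + 1) with he
  have hxe : ∀ j, p μ (e j) < δ := fun j => (Seminorm.mem_ball_zero _).mp (hx j)
  set m : ℤ → X := fun k => πl (e k) with hm
  set nf : ℤ → X := fun k => e k - m k with hnf
  have hmM : ∀ k, m k ∈ M := fun k => SetLike.coe_mem _
  have hnN : ∀ k, nf k ∈ N := by
    intro k
    have h : (M.linearProjOfIsCompl N hMN (e k) : X) + (N.linearProjOfIsCompl M hMN.symm (e k) : X) = e k :=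
      Submodule.projection_add_projection_eq_self hMN (e k)
    have : nf k = (N.linearProjOfIsCompl M hMN.symm (e k) : X) := by
      rw [hnf]
      simp only [hm, hπl, LinearMap.coe_comp, Function.comp_apply, Submodule.subtype_apply]
      exact (eq_sub_of_add_eq' h).symm
    rw [this]
    exact SetLike.coe_mem _
  -- componentwise bounds
  set Kα : ℝ := (Cp + 1) * δ with hKαdef
  set Kγc : ℝ := (Cpγ + 1) * δ with hKγdef
  have hKα : 0 < Kα := by positivity
  have hKγ : 0 < Kγc := by positivity
  have hbm : ∀ k, p β (m k) ≤ Kα := by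
    intro k
    have h1 : p β (m k) ≤ Cp * p μ₁ (e k) := hμ₁ (e k)
    have h2 : p μ₁ (e k) ≤ p μ (e k) := hpμ₁μ (e k)
    have h3 := (hxe k).le
    nlinarith [apply_nonneg (p μ₁) (e k)]
  have hbn : ∀ k, p β (nf k) ≤ Kα := by
    intro k
    have h0 : p β (nf k) ≤ p β (e k) + p β (m k) := by
      rw [hnf]; exact map_sub_le_add _ _ _
    have h1 : p β (m k) ≤ Cp * p μ₁ (e k) := hμ₁ (e k)
    have h2 : p μ₁ (e k) ≤ p μ (e k) := hpμ₁μ (e k)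
    have h4 : p β (e k) ≤ p μ (e k) := hpβμ (e k)
    have h3 := (hxe k).le
    nlinarith [apply_nonneg (p μ₁) (e k)]
  have hbmγ : ∀ k, p βγ (m k) ≤ Kγc := by
    intro k
    have h1 : p βγ (m k) ≤ Cpγ * p μ₂ (e k) := hμ₂ (e k)
    have h2 : p μ₂ (e k) ≤ p μ (e k) := hpμ₂μ (e k)
    have h3 := (hxe k).le
    nlinarith [apply_nonneg (p μ₂) (e k)]
  have hbnγ : ∀ k, p βγ (nf k) ≤ Kγc := by
    intro k
    have h0 : p βγ (nf k) ≤ p βγ (e k) + p βγ (m k) := by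
      rw [hnf]; exact map_sub_le_add _ _ _
    have h1 : p βγ (m k) ≤ Cpγ * p μ₂ (e k) := hμ₂ (e k)
    have h2 : p μ₂ (e k) ≤ p μ (e k) := hpμ₂μ (e k)
    have h4 : p βγ (e k) ≤ p μ (e k) := hpβγμ (e k)
    have h3 := (hxe k).le
    nlinarith [apply_nonneg (p μ₂) (e k)]
  -- the correction partial sums
  set S : ℤ → ℕ → X := fun j n =>
    -(∑ i ∈ Finset.range (n+1), (⇑T)^[i] (m (j - 1 - (i:ℤ)))) +
      ∑ i ∈ Finset.range n, (⇑T.symm)^[i+1] (nf (j + (i:ℤ))) with hS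
  have hSdiff : ∀ (j : ℤ) (n : ℕ), S j (n+1) - S j n
      = -((⇑T)^[n+1] (m (j - 2 - (n:ℤ)))) + (⇑T.symm)^[n+1] (nf (j + (n:ℤ))) := by
    intro j n
    simp only [hS, Finset.sum_range_succ]
    push_cast
    rw [show j - 1 - ((n:ℤ)+1) = j - 2 - (n:ℤ) by ring]
    abel
  have hkey : ∀ (j : ℤ) (n : ℕ), T (S j n) - S (j+1) n
      = e j - (⇑T)^[n+1] (m (j - 1 - (n:ℤ))) - (⇑T.symm)^[n] (nf (j + (n:ℤ))) := by
    intro j n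
    induction n with
    | zero =>
      simp only [hS, Finset.sum_range_succ, Finset.sum_range_zero, Function.iterate_one,
        Function.iterate_zero, id_eq, add_zero, zero_add, Nat.cast_zero, sub_zero,
        map_neg, map_add, map_zero]
      rw [show j + 1 - 1 = j by ring]
      simp only [hnf]
      abel
    | succ n ih =>
      have h1 := hSdiff j n
      have h2 := hSdiff (j+1) n
      have e1 : S j (n+1) = S j n
          + (-((⇑T)^[n+1] (m (j - 2 - (n:ℤ)))) + (⇑T.symm)^[n+1] (nf (j + (n:ℤ)))) := by
        rw [← h1]; abel
      have e2 : S (j+1) (n+1) = S (j+1) n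
          + (-((⇑T)^[n+1] (m (j + 1 - 2 - (n:ℤ)))) + (⇑T.symm)^[n+1] (nf (j + 1 + (n:ℤ)))) := by
        rw [← h2]; abel
      have e3 : T ((⇑T)^[n+1] (m (j - 2 - (n:ℤ)))) = (⇑T)^[n+1+1] (m (j - 2 - (n:ℤ))) :=
        (Function.iterate_succ_apply' _ _ _).symm
      have e4 : T ((⇑T.symm)^[n+1] (nf (j + (n:ℤ)))) = (⇑T.symm)^[n] (nf (j + (n:ℤ))) := by
        rw [Function.iterate_succ_apply']; exact T.apply_symm_apply _
      have e5 : T (S j n) = S (j+1) n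
          + (e j - (⇑T)^[n+1] (m (j - 1 - (n:ℤ))) - (⇑T.symm)^[n] (nf (j + (n:ℤ)))) := by
        rw [← ih]; abel
      have esplit : T (S j n + (-((⇑T)^[n+1] (m (j - 2 - (n:ℤ)))) + (⇑T.symm)^[n+1] (nf (j + (n:ℤ)))))
          = T (S j n) + T (-((⇑T)^[n+1] (m (j - 2 - (n:ℤ)))) + (⇑T.symm)^[n+1] (nf (j + (n:ℤ)))) :=
        map_add T _ _
      have eD : T (-((⇑T)^[n+1] (m (j - 2 - (n:ℤ)))) + (⇑T.symm)^[n+1] (nf (j + (n:ℤ))))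
          = -((⇑T)^[n+1+1] (m (j - 2 - (n:ℤ)))) + (⇑T.symm)^[n] (nf (j + (n:ℤ))) := by
        rw [map_add, map_neg, e3, e4]
      push_cast
      rw [e1, e2, esplit, eD, e5]
      rw [show j - 1 - ((n:ℤ)+1) = j - 2 - (n:ℤ) by ring,
          show j + ((n:ℤ)+1) = j + 1 + (n:ℤ) by ring,
          show j + 1 - 2 - (n:ℤ) = j - 1 - (n:ℤ) by ring]
      abel
  -- per-term estimates
  have htermM : ∀ (k : ℤ) (i : ℕ), p α ((⇑T)^[i] (m k)) ≤ (c*Kα) * t^i := by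
    intro k i
    calc p α ((⇑T)^[i] (m k)) ≤ c * t^i * p β (m k) := hMe (m k) (hmM k) i
      _ ≤ c * t^i * Kα :=
          mul_le_mul_of_nonneg_left (hbm k) (by positivity)
      _ = (c*Kα) * t^i := by ring
  have htermN : ∀ (k : ℤ) (i : ℕ), p α ((⇑T.symm)^[i] (nf k)) ≤ (c*Kα) * t^i := by
    intro k i
    calc p α ((⇑T.symm)^[i] (nf k)) ≤ c * t^i * p β (nf k) := hNe (nf k) (hnN k) i
      _ ≤ c * t^i * Kα :=
          mul_le_mul_of_nonneg_left (hbn k) (by positivity)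
      _ = (c*Kα) * t^i := by ring
  have htermMg : ∀ (k : ℤ) (i : ℕ), p γ ((⇑T)^[i] (m k)) ≤ (cγ*Kγc) * tγ^i := by
    intro k i
    calc p γ ((⇑T)^[i] (m k)) ≤ cγ * tγ^i * p βγ (m k) := hMeγ (m k) (hmM k) i
      _ ≤ cγ * tγ^i * Kγc :=
          mul_le_mul_of_nonneg_left (hbmγ k) (by positivity)
      _ = (cγ*Kγc) * tγ^i := by ring
  have htermNg : ∀ (k : ℤ) (i : ℕ), p γ ((⇑T.symm)^[i] (nf k)) ≤ (cγ*Kγc) * tγ^i := by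
    intro k i
    calc p γ ((⇑T.symm)^[i] (nf k)) ≤ cγ * tγ^i * p βγ (nf k) := hNeγ (nf k) (hnN k) i
      _ ≤ cγ * tγ^i * Kγc :=
          mul_le_mul_of_nonneg_left (hbnγ k) (by positivity)
      _ = (cγ*Kγc) * tγ^i := by ring
  -- uniform bound on the partial sums at p α
  have hSb : ∀ (j : ℤ) (n : ℕ), p α (S j n) ≤ 2*c*Kα/(1-t) := by
    intro j n
    have hA : p α (∑ i ∈ Finset.range (n+1), (⇑T)^[i] (m (j - 1 - (i:ℤ))))
        ≤ c*Kα/(1-t) := by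
      calc p α (∑ i ∈ Finset.range (n+1), (⇑T)^[i] (m (j - 1 - (i:ℤ))))
          ≤ ∑ i ∈ Finset.range (n+1), p α ((⇑T)^[i] (m (j - 1 - (i:ℤ)))) :=
            seminormSumLe_aux _ _ _
        _ ≤ ∑ i ∈ Finset.range (n+1), (c*Kα) * t^i :=
            Finset.sum_le_sum (fun i _ => htermM _ i)
        _ = (c*Kα) * ∑ i ∈ Finset.range (n+1), t^i := (Finset.mul_sum _ _ _).symm
        _ ≤ (c*Kα) * (1/(1-t)) :=
            mul_le_mul_of_nonneg_left (geomRangeLe_aux ht0 ht1 (n+1)) (by positivity)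
        _ = c*Kα/(1-t) := by ring
    have hB : p α (∑ i ∈ Finset.range n, (⇑T.symm)^[i+1] (nf (j + (i:ℤ))))
        ≤ c*Kα/(1-t) := by
      calc p α (∑ i ∈ Finset.range n, (⇑T.symm)^[i+1] (nf (j + (i:ℤ))))
          ≤ ∑ i ∈ Finset.range n, p α ((⇑T.symm)^[i+1] (nf (j + (i:ℤ)))) :=
            seminormSumLe_aux _ _ _
        _ ≤ ∑ i ∈ Finset.range n, (c*Kα) * t^i := by
            refine Finset.sum_le_sum (fun i _ => ?_)
            have h1 := htermN (j + (i:ℤ)) (i+1)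
            have h2 : t^(i+1) ≤ t^i := by
              calc t^(i+1) = t^i * t := pow_succ t i
                _ ≤ t^i * 1 := by nlinarith [pow_nonneg ht0.le i]
                _ = t^i := mul_one _
            have hcK : (0:ℝ) < c*Kα := by positivity
            nlinarith
        _ = (c*Kα) * ∑ i ∈ Finset.range n, t^i := (Finset.mul_sum _ _ _).symm
        _ ≤ (c*Kα) * (1/(1-t)) :=
            mul_le_mul_of_nonneg_left (geomRangeLe_aux ht0 ht1 n) (by positivity)
        _ = c*Kα/(1-t) := by ring
    calc p α (S j n)
        ≤ p α (-(∑ i ∈ Finset.range (n+1), (⇑T)^[i] (m (j - 1 - (i:ℤ)))))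
          + p α (∑ i ∈ Finset.range n, (⇑T.symm)^[i+1] (nf (j + (i:ℤ)))) := by
          rw [hS]; exact map_add_le_add _ _ _
      _ = p α (∑ i ∈ Finset.range (n+1), (⇑T)^[i] (m (j - 1 - (i:ℤ))))
          + p α (∑ i ∈ Finset.range n, (⇑T.symm)^[i+1] (nf (j + (i:ℤ)))) := by
          rw [map_neg_eq_map]
      _ ≤ c*Kα/(1-t) + c*Kα/(1-t) := add_le_add hA hB
      _ = 2*c*Kα/(1-t) := by ring
  -- the bound is < ε
  have hBlt : 2*c*Kα/(1-t) < ε := by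
    have hkey2 : δ * (2*c*(Cp+1)+1) = ε*(1-t) := by
      rw [hδdef]; field_simp
    rw [div_lt_iff₀ h1t]
    have : 2*c*Kα = δ * (2*c*(Cp+1)) := by rw [hKαdef]; ring
    nlinarith
  -- Cauchy estimates at p γ and limits
  have hcau : ∀ (j : ℤ) (k : ℕ), p γ (S j (k+1) - S j k) ≤ (2*cγ*Kγc) * tγ^(k+1) := by
    intro j k
    rw [hSdiff j k]
    calc p γ (-((⇑T)^[k+1] (m (j - 2 - (k:ℤ)))) + (⇑T.symm)^[k+1] (nf (j + (k:ℤ))))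
        ≤ p γ (-((⇑T)^[k+1] (m (j - 2 - (k:ℤ))))) + p γ ((⇑T.symm)^[k+1] (nf (j + (k:ℤ)))) :=
          map_add_le_add _ _ _
      _ = p γ ((⇑T)^[k+1] (m (j - 2 - (k:ℤ)))) + p γ ((⇑T.symm)^[k+1] (nf (j + (k:ℤ)))) := by
          rw [map_neg_eq_map]
      _ ≤ (cγ*Kγc) * tγ^(k+1) + (cγ*Kγc) * tγ^(k+1) := add_le_add (htermMg _ _) (htermNg _ _)
      _ = (2*cγ*Kγc) * tγ^(k+1) := by ring
  have hlim := fun j : ℤ => completeSeminormLimit_aux (p γ) (hcomplete γ) (S j)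
      (2*cγ*Kγc) tγ (by positivity) htγ0 htγ1 (hcau j)
  choose z hz using hlim
  -- p α bound on the limits
  have pzb : ∀ j, p α (z j) ≤ 2*c*Kα/(1-t) := by
    intro j
    refine le_of_forall_pos_le_add ?_
    intro ε' hε'
    obtain ⟨n₀, hn₀⟩ := hz j ε' hε'
    have h1 : p γ (S j n₀ - z j) < ε' := hn₀ n₀ le_rfl
    have h2 : p α (z j) ≤ p α (z j - S j n₀) + p α (S j n₀) := by
      calc p α (z j) = p α ((z j - S j n₀) + S j n₀) := by rw [sub_add_cancel]
        _ ≤ p α (z j - S j n₀) + p α (S j n₀) := map_add_le_add _ _ _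
    have h3 : p α (z j - S j n₀) ≤ p γ (z j - S j n₀) := hγα _
    have h4 : p γ (z j - S j n₀) = p γ (S j n₀ - z j) := map_sub_rev _ _ _
    linarith [hSb j n₀]
  -- the defect w j lies in the kernel of p α
  set w : ℤ → X := fun j => T (z j) - e j - z (j+1) with hw
  have hwk : ∀ j, p α (w j) = 0 := by
    intro j
    have hltw : ∀ ε' > (0:ℝ), p α (w j) < ε' := by
      intro ε' hε'
      obtain ⟨n₁, hn₁⟩ := hz j (ε'/(3*(C₁+1))) (by positivity)
      obtain ⟨n₂, hn₂⟩ := hz (j+1) (ε'/3) (by positivity)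
      obtain ⟨n₃, hn₃⟩ := exists_pow_lt_of_lt_one
        (show (0:ℝ) < ε'/(3*(2*c*Kα+1)) by positivity) ht1
      set n : ℕ := max n₁ (max n₂ n₃) with hn
      have hnn₁ : n₁ ≤ n := le_max_left _ _
      have hnn₂ : n₂ ≤ n := (le_max_left _ _).trans (le_max_right _ _)
      have hnn₃ : n₃ ≤ n := (le_max_right _ _).trans (le_max_right _ _)
      have hdec : w j = T (z j - S j n) + (T (S j n) - e j - S (j+1) n) + (S (j+1) n - z (j+1)) := by
        rw [hw]
        simp only [map_sub]
        abel
      have ht1b : p α (T (z j - S j n)) < ε'/3 := by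
        have h1 : p α (T (z j - S j n)) ≤ C₁ * p α₁ (z j - S j n) := hα₁' _
        have h2 : p α₁ (z j - S j n) ≤ p γ (z j - S j n) := hγα₁ _
        have h3 : p γ (z j - S j n) = p γ (S j n - z j) := map_sub_rev _ _ _
        have h4 : p γ (S j n - z j) < ε'/(3*(C₁+1)) := hn₁ n hnn₁
        have h5 : C₁ * p α₁ (z j - S j n) < C₁ * (ε'/(3*(C₁+1))) + ε'/(3*(C₁+1)) * 0 := by
          nlinarith [apply_nonneg (p α₁) (z j - S j n)]
        have h6 : C₁ * (ε'/(3*(C₁+1))) < ε'/3 := by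
          rw [mul_div_assoc', div_lt_div_iff₀ (by positivity) (by positivity)]
          nlinarith
        linarith
      have ht2b : p α (T (S j n) - e j - S (j+1) n) < ε'/3 := by
        have h0 : T (S j n) - e j - S (j+1) n
            = -((⇑T)^[n+1] (m (j - 1 - (n:ℤ)))) - (⇑T.symm)^[n] (nf (j + (n:ℤ))) := by
          have := hkey j n
          rw [show T (S j n) - e j - S (j+1) n = (T (S j n) - S (j+1) n) - e j by abel, this]
          abel
        rw [h0]
        have h1 : p α (-((⇑T)^[n+1] (m (j - 1 - (n:ℤ)))) - (⇑T.symm)^[n] (nf (j + (n:ℤ))))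
            ≤ p α ((⇑T)^[n+1] (m (j - 1 - (n:ℤ)))) + p α ((⇑T.symm)^[n] (nf (j + (n:ℤ)))) := by
          have := map_sub_le_add (p α) (-((⇑T)^[n+1] (m (j - 1 - (n:ℤ))))) ((⇑T.symm)^[n] (nf (j + (n:ℤ))))
          rwa [map_neg_eq_map] at this
        have h2 := htermM (j - 1 - (n:ℤ)) (n+1)
        have h3 := htermN (j + (n:ℤ)) n
        have h4 : t^(n+1) ≤ t^n := by
          calc t^(n+1) = t^n * t := pow_succ t n
            _ ≤ t^n * 1 := by nlinarith [pow_nonneg ht0.le n]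
            _ = t^n := mul_one _
        have h5 : t^n ≤ t^n₃ := pow_le_pow_of_le_one ht0.le ht1.le hnn₃
        have h6 : (2*c*Kα+1) * t^n₃ < ε'/3 := by
          have h := (lt_div_iff₀ (by positivity : (0:ℝ) < 3*(2*c*Kα+1))).mp hn₃
          rw [lt_div_iff₀ (by positivity : (0:ℝ) < 3)]
          nlinarith
        have hcK : (0:ℝ) < c*Kα := by positivity
        nlinarith [pow_nonneg ht0.le n₃]
      have ht3b : p α (S (j+1) n - z (j+1)) < ε'/3 := by
        have h1 : p α (S (j+1) n - z (j+1)) ≤ p γ (S (j+1) n - z (j+1)) := hγα _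
        have h2 : p γ (S (j+1) n - z (j+1)) < ε'/3 := hn₂ n hnn₂
        linarith
      calc p α (w j) ≤ p α (T (z j - S j n) + (T (S j n) - e j - S (j+1) n)) + p α (S (j+1) n - z (j+1)) := by
            rw [hdec]; exact map_add_le_add _ _ _
        _ ≤ p α (T (z j - S j n)) + p α (T (S j n) - e j - S (j+1) n) + p α (S (j+1) n - z (j+1)) := by
            have := map_add_le_add (p α) (T (z j - S j n)) (T (S j n) - e j - S (j+1) n)
            linarith
        _ < ε'/3 + ε'/3 + ε'/3 := by linarith
        _ = ε' := by ring
    have h0 : p α (w j) ≤ 0 := by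
      refine le_of_forall_pos_le_add ?_
      intro ε' hε'
      have := hltw ε' hε'
      linarith
    exact le_antisymm h0 (apply_nonneg _ _)
  -- kernel invariance
  have hker0 : ∀ u : X, p α u = 0 → p α (T u) = 0 := by
    intro u hu
    have : T u ∈ (⇑T '' {v : X | p α v = 0}) := ⟨u, hu, rfl⟩
    rw [hker α] at this
    exact this
  have hker1 : ∀ u : X, p α u = 0 → p α (T.symm u) = 0 := by
    intro u hu
    have : u ∈ (⇑T '' {v : X | p α v = 0}) := by rw [hker α]; exact hu
    obtain ⟨u', hu', huu⟩ := this
    rw [← huu, T.symm_apply_apply]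
    exact hu'
  have hkadd : ∀ u v : X, p α u = 0 → p α v = 0 → p α (u + v) = 0 := by
    intro u v hu hv
    refine le_antisymm ?_ (apply_nonneg _ _)
    calc p α (u + v) ≤ p α u + p α v := map_add_le_add _ _ _
      _ = 0 := by rw [hu, hv]; ring
  have hksub : ∀ u v : X, p α u = 0 → p α v = 0 → p α (u - v) = 0 := by
    intro u v hu hv
    refine le_antisymm ?_ (apply_nonneg _ _)
    calc p α (u - v) ≤ p α u + p α v := map_sub_le_add _ _ _
      _ = 0 := by rw [hu, hv]; ring
  -- the shadowing point
  set y : X := x 0 - z 0 with hy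
  set v : ℤ → X := fun j => x j - (T ^ j) y - z j with hv
  have hTpow : ∀ (j : ℤ) (u : X), (T ^ (j+1)) u = T ((T ^ j) u) := by
    intro j u
    rw [add_comm, zpow_one_add]
    rfl
  have hrel : ∀ j : ℤ, v (j+1) = T (v j) + w j := by
    intro j
    simp only [hv, hw, he]
    rw [hTpow j y]
    simp only [map_sub]
    abel
  have hvk : ∀ j : ℤ, p α (v j) = 0 := by
    intro j
    induction j using Int.induction_on with
    | zero =>
      have : v 0 = 0 := by
        simp only [hv, hy, zpow_zero]
        rw [show ((1 : X ≃L[𝕂] X) (x 0 - z 0)) = x 0 - z 0 from rfl]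
        abel
      rw [this, map_zero]
    | succ i ih =>
      rw [hrel i]
      exact hkadd _ _ (hker0 _ ih) (hwk i)
    | pred i ih =>
      have h := hrel (-(i:ℤ) - 1)
      rw [show (-(i:ℤ) - 1 + 1) = -(i:ℤ) by ring] at h
      have h3 : T (v (-(i:ℤ) - 1)) = v (-(i:ℤ)) - w (-(i:ℤ) - 1) := by
        rw [h]; abel
      have h2 : v (-(i:ℤ) - 1) = T.symm (v (-(i:ℤ)) - w (-(i:ℤ) - 1)) := by
        rw [← h3, T.symm_apply_apply]
      rw [h2]
      exact hker1 _ (hksub _ _ ih (hwk _))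
  -- conclusion
  refine ⟨y, fun j => hball ?_⟩
  rw [Seminorm.mem_ball_zero]
  have hvz : x j - (T ^ j) y = v j + z j := by
    simp only [hv]
    abel
  calc p α (x j - (T ^ j) y) = p α (v j + z j) := by rw [hvz]
    _ ≤ p α (v j) + p α (z j) := map_add_le_add _ _ _
    _ = p α (z j) := by rw [hvk j]; ring
    _ ≤ 2*c*Kα/(1-t) := pzb j
    _ < ε := hBlt
end

section
/- Suppose that X is the product of a family (X_ℓ)_{ℓ∈L} of locally convex spaces, that T_ℓ ∈ GL(X_ℓ) for each ℓ∈L, and that T ∈ GL(X) is the product operator given by T((x_ℓ)_{ℓ∈L}) := (T_ℓ x_ℓ)_{ℓ∈L}. If each T_ℓ is generalized hyperbolic, then so is T; if each T_ℓ is hyperbolic, then so is T. -/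
open Filter Topology Set

/-- An invertible operator `T ∈ GL(X)` is hyperbolic: generalized hyperbolic with both `M` and
`N` invariant under `T` (so `T(N) = N`). -/
def IsHyperbolicInv {𝕂 : Type*} [RCLike 𝕂] {X : Type*} [AddCommGroup X] [Module 𝕂 X]
    [TopologicalSpace X] {I : Type*} (p : I → Seminorm 𝕂 X) (T : X ≃L[𝕂] X) : Prop :=
  ∃ (M N : Submodule 𝕂 X) (hMN : IsCompl M N),
    Continuous (fun x : X => (M.linearProjOfIsCompl N hMN x : X)) ∧
    (∀ y ∈ M, T y ∈ M) ∧
    (∀ z ∈ N, T z ∈ N) ∧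
    (∀ z ∈ N, T.symm z ∈ N) ∧
    ∀ α : I, ∃ β : I, ∃ c > (0 : ℝ), ∃ t ∈ Set.Ioo (0 : ℝ) 1,
      (∀ y ∈ M, ∀ n : ℕ, p α ((⇑T)^[n] y) ≤ c * t ^ n * p β y) ∧
      (∀ z ∈ N, ∀ n : ℕ, p α ((⇑T.symm)^[n] z) ≤ c * t ^ n * p β z)

/-- The canonical directed family of seminorms inducing the product topology on `∀ ℓ, X ℓ`:
maxima of finitely many seminorms composed with the coordinate projections. -/
noncomputable def piSeminormFamily {𝕂 : Type*} [RCLike 𝕂] {L : Type*} {X : L → Type*}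
    [∀ ℓ, AddCommGroup (X ℓ)] [∀ ℓ, Module 𝕂 (X ℓ)] {I : L → Type*}
    (p : ∀ ℓ, I ℓ → Seminorm 𝕂 (X ℓ)) :
    (Finset L × ∀ ℓ, I ℓ) → Seminorm 𝕂 (∀ ℓ, X ℓ) :=
  fun si => si.1.sup fun ℓ => (p ℓ (si.2 ℓ)).comp (LinearMap.proj ℓ)

theorem pi_gh_aux {𝕂 : Type*} [RCLike 𝕂] {L : Type*} {X : L → Type*}
    [∀ ℓ, AddCommGroup (X ℓ)] [∀ ℓ, Module 𝕂 (X ℓ)] [∀ ℓ, TopologicalSpace (X ℓ)]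
    {I : L → Type*}
    (p : ∀ ℓ, I ℓ → Seminorm 𝕂 (X ℓ))
    (T : ∀ ℓ, X ℓ ≃L[𝕂] X ℓ)
    (Tprod : (∀ ℓ, X ℓ) ≃L[𝕂] (∀ ℓ, X ℓ))
    (hTprod : ∀ (x : ∀ ℓ, X ℓ) (ℓ : L), Tprod x ℓ = T ℓ (x ℓ))
    (Mf Nf : ∀ ℓ, Submodule 𝕂 (X ℓ)) (hMNf : ∀ ℓ, IsCompl (Mf ℓ) (Nf ℓ))
    (hcont : ∀ ℓ, Continuous fun x : X ℓ => ((Mf ℓ).linearProjOfIsCompl (Nf ℓ) (hMNf ℓ) x : X ℓ))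
    (hTM : ∀ ℓ, ∀ y ∈ Mf ℓ, T ℓ y ∈ Mf ℓ)
    (hTN : ∀ ℓ, ∀ z ∈ Nf ℓ, (T ℓ).symm z ∈ Nf ℓ)
    (hest : ∀ ℓ, ∀ α : I ℓ, ∃ β, ∃ c > (0:ℝ), ∃ t ∈ Set.Ioo (0:ℝ) 1,
      (∀ y ∈ Mf ℓ, ∀ n : ℕ, p ℓ α ((⇑(T ℓ))^[n] y) ≤ c * t ^ n * p ℓ β y) ∧
      (∀ z ∈ Nf ℓ, ∀ n : ℕ, p ℓ α ((⇑(T ℓ).symm)^[n] z) ≤ c * t ^ n * p ℓ β z)) :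
    ∃ hMN : IsCompl (Submodule.pi Set.univ Mf) (Submodule.pi Set.univ Nf),
      Continuous (fun x : ∀ ℓ, X ℓ =>
        ((Submodule.pi Set.univ Mf).linearProjOfIsCompl (Submodule.pi Set.univ Nf) hMN x : ∀ ℓ, X ℓ)) ∧
      (∀ y ∈ Submodule.pi Set.univ Mf, Tprod y ∈ Submodule.pi Set.univ Mf) ∧
      (∀ z ∈ Submodule.pi Set.univ Nf, Tprod.symm z ∈ Submodule.pi Set.univ Nf) ∧
      ∀ si : Finset L × ∀ ℓ, I ℓ, ∃ sj, ∃ c > (0:ℝ), ∃ t ∈ Set.Ioo (0:ℝ) 1,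
        (∀ y ∈ Submodule.pi Set.univ Mf, ∀ n : ℕ,
          piSeminormFamily p si ((⇑Tprod)^[n] y) ≤ c * t ^ n * piSeminormFamily p sj y) ∧
        (∀ z ∈ Submodule.pi Set.univ Nf, ∀ n : ℕ,
          piSeminormFamily p si ((⇑Tprod.symm)^[n] z) ≤ c * t ^ n * piSeminormFamily p sj z) := by
  have hTsymm : ∀ (x : ∀ ℓ, X ℓ) ℓ, Tprod.symm x ℓ = (T ℓ).symm (x ℓ) := by
    intro x ℓ
    have h : Tprod (fun j => (T j).symm (x j)) = x := by
      funext j; rw [hTprod]; simp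
    conv_lhs => rw [← h]
    rw [Tprod.symm_apply_apply]
  have hiter : ∀ (n : ℕ) (x : ∀ ℓ, X ℓ) (ℓ : L), (⇑Tprod)^[n] x ℓ = (⇑(T ℓ))^[n] (x ℓ) := by
    intro n
    induction n with
    | zero => intro x ℓ; simp
    | succ n ih =>
      intro x ℓ
      rw [Function.iterate_succ_apply', Function.iterate_succ_apply', hTprod, ih]
  have hitersymm : ∀ (n : ℕ) (x : ∀ ℓ, X ℓ) (ℓ : L),
      (⇑Tprod.symm)^[n] x ℓ = (⇑(T ℓ).symm)^[n] (x ℓ) := by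
    intro n
    induction n with
    | zero => intro x ℓ; simp
    | succ n ih =>
      intro x ℓ
      rw [Function.iterate_succ_apply', Function.iterate_succ_apply', hTsymm, ih]
  set Mpi := Submodule.pi Set.univ Mf with hMpi
  set Npi := Submodule.pi Set.univ Nf with hNpi
  have hMN : IsCompl Mpi Npi := by
    constructor
    · rw [Submodule.disjoint_def]
      intro x hxM hxN
      funext ℓ
      exact Submodule.disjoint_def.mp (hMNf ℓ).disjoint (x ℓ) (hxM ℓ trivial) (hxN ℓ trivial)
    · rw [codisjoint_iff, eq_top_iff]
      intro x _
      rw [Submodule.mem_sup]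
      refine ⟨fun ℓ => ((Mf ℓ).linearProjOfIsCompl (Nf ℓ) (hMNf ℓ) (x ℓ) : X ℓ),
        fun ℓ _ => Submodule.coe_mem _,
        fun ℓ => ((Nf ℓ).linearProjOfIsCompl (Mf ℓ) (hMNf ℓ).symm (x ℓ) : X ℓ),
        fun ℓ _ => Submodule.coe_mem _, ?_⟩
      funext ℓ
      exact Submodule.projection_add_projection_eq_self (hMNf ℓ) (x ℓ)
  refine ⟨hMN, ?_, ?_, ?_, ?_⟩
  · have hproj : ∀ x : ∀ ℓ, X ℓ, (Mpi.linearProjOfIsCompl Npi hMN x : ∀ ℓ, X ℓ)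
        = fun ℓ => ((Mf ℓ).linearProjOfIsCompl (Nf ℓ) (hMNf ℓ) (x ℓ) : X ℓ) := by
      intro x
      set y : ∀ ℓ, X ℓ := fun ℓ => ((Mf ℓ).linearProjOfIsCompl (Nf ℓ) (hMNf ℓ) (x ℓ) : X ℓ) with hy'
      set z : ∀ ℓ, X ℓ := fun ℓ => ((Nf ℓ).linearProjOfIsCompl (Mf ℓ) (hMNf ℓ).symm (x ℓ) : X ℓ)
      have hy : y ∈ Mpi := fun ℓ _ => Submodule.coe_mem _
      have hz : z ∈ Npi := fun ℓ _ => Submodule.coe_mem _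
      have hx : x = y + z := by
        funext ℓ
        exact (Submodule.projection_add_projection_eq_self (hMNf ℓ) (x ℓ)).symm
      have h1 : Mpi.linearProjOfIsCompl Npi hMN y = ⟨y, hy⟩ :=
        Submodule.linearProjOfIsCompl_apply_left hMN ⟨y, hy⟩
      have h2 : Mpi.linearProjOfIsCompl Npi hMN z = 0 :=
        Submodule.projectionOnto_apply_of_mem_right hMN hz
      rw [hx, map_add, h1, h2, add_zero]
    have heq : (fun x : ∀ ℓ, X ℓ => (Mpi.linearProjOfIsCompl Npi hMN x : ∀ ℓ, X ℓ))
        = fun x ℓ => ((Mf ℓ).linearProjOfIsCompl (Nf ℓ) (hMNf ℓ) (x ℓ) : X ℓ) := funext hproj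
    rw [heq]
    exact continuous_pi fun ℓ => (hcont ℓ).comp (continuous_apply ℓ)
  · intro y hy ℓ _
    rw [hTprod]
    exact hTM ℓ _ (hy ℓ trivial)
  · intro z hz ℓ _
    rw [hTsymm]
    exact hTN ℓ _ (hz ℓ trivial)
  · choose β cc hcc tt htt hM hN using hest
    rintro ⟨s, α⟩
    refine ⟨(s, fun ℓ => β ℓ (α ℓ)), 1 + ∑ ℓ ∈ s, |cc ℓ (α ℓ)|, by positivity,
      if h : s.Nonempty then s.sup' h (fun ℓ => tt ℓ (α ℓ)) else 1/2, ?_, ?_, ?_⟩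
    · by_cases h : s.Nonempty
      · rw [dif_pos h]
        obtain ⟨ℓ, hℓ, he⟩ := Finset.exists_mem_eq_sup' h (fun ℓ => tt ℓ (α ℓ))
        rw [he]
        exact htt ℓ (α ℓ)
      · rw [dif_neg h]
        norm_num
    all_goals {
      intro y hy n
      set c : ℝ := 1 + ∑ ℓ ∈ s, |cc ℓ (α ℓ)| with hc'
      set t : ℝ := if h : s.Nonempty then s.sup' h (fun ℓ => tt ℓ (α ℓ)) else 1/2 with ht'
      have hc : (0:ℝ) < c := by positivity
      have ht0 : (0:ℝ) < t := by
        by_cases h : s.Nonempty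
        · rw [ht', dif_pos h]
          obtain ⟨ℓ, hℓ, he⟩ := Finset.exists_mem_eq_sup' h (fun ℓ => tt ℓ (α ℓ))
          rw [he]; exact (htt ℓ (α ℓ)).1
        · rw [ht', dif_neg h]; norm_num
      have hcle : ∀ ℓ ∈ s, cc ℓ (α ℓ) ≤ c := by
        intro ℓ hℓ
        calc cc ℓ (α ℓ) ≤ |cc ℓ (α ℓ)| := le_abs_self _
        _ ≤ ∑ ℓ ∈ s, |cc ℓ (α ℓ)| := Finset.single_le_sum (f := fun ℓ => |cc ℓ (α ℓ)|) (fun i _ => abs_nonneg _) hℓ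
        _ ≤ c := by rw [hc']; linarith
      have htle : ∀ ℓ ∈ s, tt ℓ (α ℓ) ≤ t := by
        intro ℓ hℓ
        rw [ht', dif_pos ⟨ℓ, hℓ⟩]
        exact Finset.le_sup' (fun ℓ => tt ℓ (α ℓ)) hℓ
      apply Seminorm.finset_sup_apply_le
        (mul_nonneg (mul_nonneg hc.le (pow_nonneg ht0.le n)) (apply_nonneg _ _))
      intro ℓ hℓ
      rw [Seminorm.comp_apply]
      have hQ : p ℓ (β ℓ (α ℓ)) (y ℓ) ≤ piSeminormFamily p (s, fun ℓ => β ℓ (α ℓ)) y := by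
        have := Seminorm.le_finset_sup_apply (p := fun ℓ => (p ℓ (β ℓ (α ℓ))).comp
          (LinearMap.proj (φ := X) ℓ)) (x := y) hℓ
        rw [Seminorm.comp_apply] at this
        exact this
      have hct : cc ℓ (α ℓ) * tt ℓ (α ℓ) ^ n ≤ c * t ^ n :=
        mul_le_mul (hcle ℓ hℓ) (pow_le_pow_left₀ (htt ℓ (α ℓ)).1.le (htle ℓ hℓ) n)
          (pow_nonneg (htt ℓ (α ℓ)).1.le n) hc.le
      first
      | calc p ℓ (α ℓ) ((LinearMap.proj ℓ) ((⇑Tprod)^[n] y))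
            = p ℓ (α ℓ) ((⇑(T ℓ))^[n] (y ℓ)) := by rw [LinearMap.proj_apply, hiter]
        _ ≤ cc ℓ (α ℓ) * tt ℓ (α ℓ) ^ n * p ℓ (β ℓ (α ℓ)) (y ℓ) :=
            hM ℓ (α ℓ) (y ℓ) (hy ℓ trivial) n
        _ ≤ c * t ^ n * piSeminormFamily p (s, fun ℓ => β ℓ (α ℓ)) y :=
            mul_le_mul hct hQ (apply_nonneg _ _)
              (mul_nonneg hc.le (pow_nonneg ht0.le n))
      | calc p ℓ (α ℓ) ((LinearMap.proj ℓ) ((⇑Tprod.symm)^[n] y))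
            = p ℓ (α ℓ) ((⇑(T ℓ).symm)^[n] (y ℓ)) := by rw [LinearMap.proj_apply, hitersymm]
        _ ≤ cc ℓ (α ℓ) * tt ℓ (α ℓ) ^ n * p ℓ (β ℓ (α ℓ)) (y ℓ) :=
            hN ℓ (α ℓ) (y ℓ) (hy ℓ trivial) n
        _ ≤ c * t ^ n * piSeminormFamily p (s, fun ℓ => β ℓ (α ℓ)) y :=
            mul_le_mul hct hQ (apply_nonneg _ _)
              (mul_nonneg hc.le (pow_nonneg ht0.le n))
    }

/-- Suppose that `X` is the product of a family `(X ℓ)` of locally convex spaces, that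
`T ℓ ∈ GL(X ℓ)` for each `ℓ`, and that `Tprod ∈ GL(X)` is the product operator. If each `T ℓ`
is generalized hyperbolic, then so is `Tprod` (with respect to the canonical product family of
seminorms); if each `T ℓ` is hyperbolic, then so is `Tprod`. -/
theorem product_generalizedHyperbolic
    {𝕂 : Type*} [RCLike 𝕂] {L : Type*} {X : L → Type*}
    [∀ ℓ, AddCommGroup (X ℓ)] [∀ ℓ, Module 𝕂 (X ℓ)] [∀ ℓ, TopologicalSpace (X ℓ)]
    [∀ ℓ, IsTopologicalAddGroup (X ℓ)] [∀ ℓ, ContinuousSMul 𝕂 (X ℓ)]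
    {I : L → Type*} [∀ ℓ, Nonempty (I ℓ)]
    (p : ∀ ℓ, I ℓ → Seminorm 𝕂 (X ℓ)) (hp : ∀ ℓ, WithSeminorms (p ℓ))
    (hdir : ∀ ℓ, ∀ α β : I ℓ, ∃ γ : I ℓ, p ℓ α ≤ p ℓ γ ∧ p ℓ β ≤ p ℓ γ)
    (T : ∀ ℓ, X ℓ ≃L[𝕂] X ℓ)
    (Tprod : (∀ ℓ, X ℓ) ≃L[𝕂] (∀ ℓ, X ℓ))
    (hTprod : ∀ (x : ∀ ℓ, X ℓ) (ℓ : L), Tprod x ℓ = T ℓ (x ℓ)) :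
    ((∀ ℓ, IsGeneralizedHyperbolicInv (p ℓ) (T ℓ)) →
      IsGeneralizedHyperbolicInv (piSeminormFamily p) Tprod) ∧
    ((∀ ℓ, IsHyperbolicInv (p ℓ) (T ℓ)) →
      IsHyperbolicInv (piSeminormFamily p) Tprod) := by
  constructor
  · intro h
    choose M N hMN hc hTM hTN hest using h
    obtain ⟨hMN', hc', hTM', hTN', hest'⟩ := pi_gh_aux p T Tprod hTprod M N hMN hc hTM hTN hest
    exact ⟨_, _, hMN', hc', hTM', hTN', hest'⟩
  · intro h
    choose M N hMN hc hTM hTN1 hTN hest using h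
    obtain ⟨hMN', hc', hTM', hTN', hest'⟩ := pi_gh_aux p T Tprod hTprod M N hMN hc hTM hTN hest
    refine ⟨_, _, hMN', hc', hTM', ?_, hTN', hest'⟩
    intro z hz ℓ _
    rw [hTprod]
    exact hTN1 ℓ _ (hz ℓ trivial)
end

section
/- Let C be an open connected set in a locally convex space X over ℝ or ℂ. For any a, b ∈ C, there is a homeomorphism h : X → X such that h(a) = b and h(x) = x for all x ∈ X \ C. -/
open Filter Topology Set
open scoped NNReal

section Aux

variable {X : Type*} [AddCommGroup X] [Module ℝ X]
  [TopologicalSpace X] [IsTopologicalAddGroup X] [ContinuousSMul ℝ X]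

/-- Core construction: for an open convex symmetric neighborhood `V` of `0` and `b ∈ V`,
there is a homeomorphism of `X` sending `0` to `b` and fixing the complement of `V`. -/
theorem exists_homeomorph_aux_zero (V : Set X) (hVo : IsOpen V) (hVc : Convex ℝ V)
    (hsymm : ∀ x ∈ V, -x ∈ V) (h0 : (0 : X) ∈ V) (b : X) (hbV : b ∈ V) :
    ∃ h : X ≃ₜ X, h 0 = b ∧ ∀ x ∉ V, h x = x := by
  have hVnhds : V ∈ 𝓝 (0 : X) := hVo.mem_nhds h0
  have habs : Absorbent ℝ V := absorbent_nhds_zero hVnhds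
  have hpcont : Continuous (gauge V) := continuous_gauge hVc hVnhds
  have hk : gauge V b < 1 := gauge_lt_one_of_mem_of_isOpen hVo hbV
  have hk0 : 0 ≤ gauge V b := gauge_nonneg _
  -- absolute homogeneity using symmetry
  have hhom : ∀ (c : ℝ) (x : X), gauge V (c • x) = |c| * gauge V x := by
    intro c x
    rcases le_or_gt 0 c with h | h
    · rw [gauge_smul_of_nonneg h, abs_of_nonneg h, smul_eq_mul]
    · have : c • x = -((-c) • x) := by rw [neg_smul, neg_neg]
      rw [this, gauge_neg hsymm, gauge_smul_of_nonneg (by linarith), abs_of_neg h, smul_eq_mul]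
  -- subadditivity consequences
  have hsub : ∀ u v : X, gauge V u ≤ gauge V v + gauge V (u - v) := by
    intro u v
    have := gauge_add_le hVc habs v (u - v)
    rwa [add_sub_cancel] at this
  have hq : ∀ u v : X, |gauge V u - gauge V v| ≤ max (gauge V (u - v)) (gauge V (v - u)) := by
    intro u v
    rw [abs_sub_le_iff]
    constructor
    · have := hsub u v
      have h2 := le_max_left (gauge V (u - v)) (gauge V (v - u))
      linarith
    · have := hsub v u
      have h2 := le_max_right (gauge V (u - v)) (gauge V (v - u))
      linarith
  -- the bump function
  set φ : X → ℝ := fun x => max (1 - gauge V x) 0 with hφdef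
  have hφlip : ∀ u v : X, |φ u - φ v| ≤ |gauge V u - gauge V v| := by
    intro u v
    have := abs_max_sub_max_le_abs (1 - gauge V u) (1 - gauge V v) 0
    calc |φ u - φ v| ≤ |(1 - gauge V u) - (1 - gauge V v)| := this
      _ = |gauge V v - gauge V u| := by ring_nf
      _ = |gauge V u - gauge V v| := abs_sub_comm _ _
  have hφcont : Continuous φ := (continuous_const.sub hpcont).max continuous_const
  have hφ0 : φ 0 = 1 := by simp [hφdef, gauge_zero]
  have hφout : ∀ x ∉ V, φ x = 0 := by
    intro x hx
    have h1 : (1 : ℝ) ≤ gauge V x := by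
      by_contra hlt
      exact hx (by rw [← gauge_lt_one_eq_self_of_isOpen hVc h0 hVo]; exact lt_of_not_ge hlt)
    simp [hφdef, max_eq_right, sub_nonpos.2 h1]
  -- the contraction family
  set K : ℝ≥0 := ⟨gauge V b, hk0⟩ with hKdef
  have hKlt : K < 1 := by
    rw [← NNReal.coe_lt_coe]
    exact_mod_cast hk
  set g : X → ℝ → ℝ := fun y s => φ (y - s • b) with hgdef
  have hgcontr : ∀ y, ContractingWith K (g y) := by
    intro y
    refine ⟨hKlt, LipschitzWith.of_dist_le_mul fun s t => ?_⟩
    have hdiff : (y - s • b) - (y - t • b) = (t - s) • b := by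
      rw [sub_smul]; abel
    have hdiff' : (y - t • b) - (y - s • b) = (s - t) • b := by
      rw [sub_smul]; abel
    calc dist (g y s) (g y t) = |φ (y - s • b) - φ (y - t • b)| := rfl
      _ ≤ |gauge V (y - s • b) - gauge V (y - t • b)| := hφlip _ _
      _ ≤ max (gauge V ((y - s • b) - (y - t • b))) (gauge V ((y - t • b) - (y - s • b))) :=
          hq _ _
      _ = max (|t - s| * gauge V b) (|s - t| * gauge V b) := by rw [hdiff, hdiff', hhom, hhom]
      _ = |s - t| * gauge V b := by rw [abs_sub_comm t s, max_self]
      _ = (K : ℝ) * dist s t := by rw [mul_comm]; rfl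
  set σ : X → ℝ := fun y => ContractingWith.fixedPoint (g y) (hgcontr y) with hσdef
  have hσfix : ∀ y, φ (y - σ y • b) = σ y := fun y => (hgcontr y).fixedPoint_isFixedPt
  -- Lipschitz-type estimate on σ
  have hσd : ∀ y y', dist (σ y) (σ y') ≤
      max (gauge V (y - y')) (gauge V (y' - y)) / (1 - (K : ℝ)) := by
    intro y y'
    refine (hgcontr y).fixedPoint_lipschitz_in_map (hgcontr y') fun s => ?_
    have hdiff : (y - s • b) - (y' - s • b) = y - y' := by abel
    have hdiff' : (y' - s • b) - (y - s • b) = y' - y := by abel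
    calc dist (g y s) (g y' s) = |φ (y - s • b) - φ (y' - s • b)| := rfl
      _ ≤ |gauge V (y - s • b) - gauge V (y' - s • b)| := hφlip _ _
      _ ≤ max (gauge V ((y - s • b) - (y' - s • b))) (gauge V ((y' - s • b) - (y - s • b))) :=
          hq _ _
      _ = max (gauge V (y - y')) (gauge V (y' - y)) := by rw [hdiff, hdiff']
  have hσcont : Continuous σ := by
    rw [continuous_iff_continuousAt]
    intro y₀
    rw [ContinuousAt, tendsto_iff_dist_tendsto_zero]
    have hFc : Continuous fun y : X =>
        max (gauge V (y - y₀)) (gauge V (y₀ - y)) / (1 - (K : ℝ)) :=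
      (((hpcont.comp (continuous_id.sub continuous_const)).max
        (hpcont.comp (continuous_const.sub continuous_id)))).div_const _
    have hF0 : max (gauge V (y₀ - y₀)) (gauge V (y₀ - y₀)) / (1 - (K : ℝ)) = 0 := by
      simp [gauge_zero]
    have hFt : Tendsto (fun y : X =>
        max (gauge V (y - y₀)) (gauge V (y₀ - y)) / (1 - (K : ℝ))) (𝓝 y₀) (𝓝 0) := by
      have := hFc.tendsto y₀
      rwa [hF0] at this
    exact squeeze_zero (fun _ => dist_nonneg) (fun y => hσd y y₀) hFt
  -- build the homeomorphism
  refine ⟨{ toFun := fun x => x + φ x • b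
            invFun := fun y => y - σ y • b
            left_inv := ?_
            right_inv := ?_
            continuous_toFun := continuous_id.add (hφcont.smul continuous_const)
            continuous_invFun := continuous_id.sub (hσcont.smul continuous_const) }, ?_, ?_⟩
  · intro x
    have hfp : Function.IsFixedPt (g (x + φ x • b)) (φ x) := by
      show φ ((x + φ x • b) - φ x • b) = φ x
      rw [add_sub_cancel_right]
    have hs : σ (x + φ x • b) = φ x := ((hgcontr _).fixedPoint_unique hfp).symm
    simp only [hs, add_sub_cancel_right]
  · intro y
    show (y - σ y • b) + φ (y - σ y • b) • b = y
    rw [hσfix y]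
    abel
  · show (0 : X) + φ 0 • b = b
    rw [hφ0, one_smul, zero_add]
  · intro x hx
    show x + φ x • b = x
    rw [hφout x hx, zero_smul, add_zero]

/-- Local step: around any point of an open set `C` in a locally convex space, there is an open
neighborhood `U ⊆ C` such that any point of `U` can be reached from the center by a homeomorphism
fixing the complement of `C`. -/
theorem exists_nhds_homeomorph_aux [LocallyConvexSpace ℝ X]
    (C : Set X) (hC : IsOpen C) (c : X) (hc : c ∈ C) :
    ∃ U : Set X, IsOpen U ∧ c ∈ U ∧ U ⊆ C ∧
      ∀ d ∈ U, ∃ h : X ≃ₜ X, h c = d ∧ ∀ x ∉ C, h x = x := by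
  obtain ⟨s, ⟨hs_nhds, hs_conv⟩, hsC⟩ :=
    (LocallyConvexSpace.convex_basis (𝕜 := ℝ) c).mem_iff.1 (hC.mem_nhds hc)
  set V₁ : Set X := interior s with hV₁def
  have hV₁o : IsOpen V₁ := isOpen_interior
  have hV₁c : Convex ℝ V₁ := hs_conv.interior
  have hcV₁ : c ∈ V₁ := mem_interior_iff_mem_nhds.2 hs_nhds
  have hV₁C : V₁ ⊆ C := interior_subset.trans hsC
  set A : Set X := (fun x => c + x) ⁻¹' V₁ with hAdef
  set W : Set X := A ∩ (-A) with hWdef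
  have hAo : IsOpen A := hV₁o.preimage (continuous_const.add continuous_id)
  have hAc : Convex ℝ A := by
    intro x hx y hy t u ht hu htu
    have : c + (t • x + u • y) = t • (c + x) + u • (c + y) := by
      have hc' : c = t • c + u • c := by
        rw [← add_smul, htu, one_smul]
      calc c + (t • x + u • y) = (t • c + u • c) + (t • x + u • y) := by rw [← hc']
        _ = t • (c + x) + u • (c + y) := by rw [smul_add, smul_add]; abel
    show c + (t • x + u • y) ∈ V₁
    rw [this]
    exact hV₁c hx hy ht hu htu
  have hWo : IsOpen W := hAo.inter hAo.neg
  have hWc : Convex ℝ W := hAc.inter hAc.neg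
  have hWsymm : ∀ x ∈ W, -x ∈ W := by
    intro x hx
    exact ⟨hx.2, by simpa using hx.1⟩
  have h0W : (0 : X) ∈ W := by
    constructor
    · show c + 0 ∈ V₁; simpa using hcV₁
    · show -(0:X) ∈ A; show c + -(0:X) ∈ V₁; simpa using hcV₁
  have hWC : ∀ w ∈ W, c + w ∈ C := fun w hw => hV₁C hw.1
  refine ⟨(fun d => d - c) ⁻¹' W, hWo.preimage (continuous_id.sub continuous_const), ?_, ?_, ?_⟩
  · show c - c ∈ W; simpa using h0W
  · intro d hd
    have := hWC _ hd
    rwa [add_sub_cancel] at this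
  · intro d hd
    obtain ⟨h0, h00, h0fix⟩ := exists_homeomorph_aux_zero W hWo hWc hWsymm h0W (d - c) hd
    refine ⟨((Homeomorph.addLeft c).symm.trans h0).trans (Homeomorph.addLeft c), ?_, ?_⟩
    · show c + h0 (-c + c) = d
      rw [neg_add_cancel, h00, add_sub_cancel]
    · intro x hx
      show c + h0 (-c + x) = x
      have hnx : -c + x ∉ W := by
        intro hmem
        exact hx (by simpa [add_neg_cancel_left] using hWC _ hmem)
      rw [h0fix _ hnx, add_neg_cancel_left]

end Aux

/-- Let `C` be an open connected set in a locally convex space `X` (over `ℝ` or `ℂ`). For any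
`a, b ∈ C`, there is a homeomorphism `h : X → X` such that `h a = b` and `h x = x` for all
`x ∈ X \ C`. -/
theorem exists_homeomorph_of_isOpen_isConnected
    {𝕂 : Type*} [RCLike 𝕂] {X : Type*} [AddCommGroup X] [Module 𝕂 X]
    [Module ℝ X] [IsScalarTower ℝ 𝕂 X]
    [TopologicalSpace X] [IsTopologicalAddGroup X] [ContinuousSMul 𝕂 X] [ContinuousSMul ℝ X]
    [LocallyConvexSpace ℝ X] [T2Space X]
    (C : Set X) (hC : IsOpen C) (hconn : IsConnected C)
    (a b : X) (ha : a ∈ C) (hb : b ∈ C) :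
    ∃ h : X ≃ₜ X, h a = b ∧ ∀ x ∉ C, h x = x := by
  set S : Set X := {x | x ∈ C ∧ ∃ h : X ≃ₜ X, h a = x ∧ ∀ y ∉ C, h y = y} with hSdef
  have haS : a ∈ S := ⟨ha, Homeomorph.refl X, rfl, fun _ _ => rfl⟩
  have hSopen : IsOpen S := by
    rw [isOpen_iff_mem_nhds]
    rintro c ⟨hcC, h1, h1a, h1fix⟩
    obtain ⟨U, hUo, hcU, hUC, hU⟩ := exists_nhds_homeomorph_aux C hC c hcC
    refine Filter.mem_of_superset (hUo.mem_nhds hcU) ?_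
    intro d hd
    obtain ⟨h2, h2c, h2fix⟩ := hU d hd
    exact ⟨hUC hd, h1.trans h2, by simp [h1a, h2c], fun y hy => by simp [h1fix y hy, h2fix y hy]⟩
  have hTopen : IsOpen (C \ S) := by
    rw [isOpen_iff_mem_nhds]
    rintro c ⟨hcC, hcS⟩
    obtain ⟨U, hUo, hcU, hUC, hU⟩ := exists_nhds_homeomorph_aux C hC c hcC
    refine Filter.mem_of_superset (hUo.mem_nhds hcU) ?_
    intro d hd
    refine ⟨hUC hd, fun hdS => hcS ?_⟩
    obtain ⟨-, h1, h1a, h1fix⟩ := hdS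
    obtain ⟨h2, h2c, h2fix⟩ := hU d hd
    refine ⟨hcC, h1.trans h2.symm, ?_, fun y hy => ?_⟩
    · simp only [Homeomorph.trans_apply, h1a, ← h2c, Homeomorph.symm_apply_apply]
    · have := h2fix y hy
      simp only [Homeomorph.trans_apply, h1fix y hy]
      conv_lhs => rw [← this]
      exact h2.symm_apply_apply y
  have hbS : b ∈ S := by
    by_contra hbS
    have hcover : C ⊆ S ∪ (C \ S) := fun x hx => by
      by_cases h : x ∈ S
      · exact Or.inl h
      · exact Or.inr ⟨hx, h⟩
    obtain ⟨x, -, hxS, -, hxS'⟩ :=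
      hconn.isPreconnected S (C \ S) hSopen hTopen hcover ⟨a, ha, haS⟩ ⟨b, hb, hb, hbS⟩
    exact hxS' hxS
  exact hbS.2
end

section
/- Every open convex set C in a locally convex space X of real dimension at least three, equipped with the uniformity induced from X, is strongly locally multihomogeneous. -/
open Filter Topology Set Pointwise Cardinal

set_option linter.unusedSectionVars false
set_option maxHeartbeats 1000000

namespace SLMH

section Aux

variable {X : Type*} [AddCommGroup X] [Module ℝ X]
  [TopologicalSpace X] [IsTopologicalAddGroup X] [ContinuousSMul ℝ X]



noncomputable def phi (t : ℝ) : ℝ := max (1 - t) 0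

lemma phi_nonneg (t : ℝ) : 0 ≤ phi t := le_max_right _ _
lemma phi_le_one {t : ℝ} (ht : 0 ≤ t) : phi t ≤ 1 := by
  unfold phi; rw [max_le_iff]; constructor <;> linarith
lemma phi_zero : phi 0 = 1 := by norm_num [phi]
lemma phi_of_one_le {t : ℝ} (ht : 1 ≤ t) : phi t = 0 := by
  unfold phi; rw [max_eq_right]; linarith
lemma phi_lip (s t : ℝ) : |phi s - phi t| ≤ |s - t| := by
  have := abs_max_sub_max_le_abs (1 - s) (1 - t) 0
  calc |phi s - phi t| ≤ |(1 - s) - (1 - t)| := this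
    _ = |s - t| := by rw [abs_sub_comm]; ring_nf

lemma continuous_phi : Continuous phi := (continuous_const.sub continuous_id).max continuous_const

/-- The single move homeomorphism. -/
lemma exists_move (r : X → ℝ) (hr : Continuous r)
    (hadd : ∀ x y, r (x + y) ≤ r x + r y)
    (hsmul : ∀ (c : ℝ) (x : X), r (c • x) = |c| * r x)
    (a b : X) (hab : r (b - a) < 1) :
    ∃ H : X ≃ₜ X, H a = b ∧ (∀ x, 1 ≤ r (x - a) → H x = x) ∧
      (∀ x, r (x - a) < 1 → r (H x - a) < 1) := by
  have hr0 : r 0 = 0 := by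
    have := hsmul 0 0; simpa using this
  have hrneg : ∀ x, r (-x) = r x := by
    intro x; have := hsmul (-1) x; simpa using this
  have hrnn : ∀ x, 0 ≤ r x := by
    intro x
    have h2 := hadd x (-x)
    rw [add_neg_cancel, hr0, hrneg] at h2
    linarith
  have hrdiff : ∀ x y, |r x - r y| ≤ r (x - y) := by
    intro x y
    rw [abs_le]
    constructor
    · have h2 := hadd (y - x) x; rw [sub_add_cancel] at h2
      rw [show y - x = -(x - y) by abel, hrneg] at h2
      linarith
    · have := hadd (x - y) y; rw [sub_add_cancel] at this; linarith
  set d := b - a with hd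
  set L := r (b - a) with hL
  have hL0 : 0 ≤ L := hrnn _
  set f : X → ℝ := fun x => phi (r (x - a)) with hf
  set H : X → X := fun x => x + f x • d with hH
  have hflip : ∀ x y, |f x - f y| ≤ r (x - y) := by
    intro x y
    calc |f x - f y| ≤ |r (x - a) - r (y - a)| := phi_lip _ _
      _ ≤ r ((x - a) - (y - a)) := hrdiff _ _
      _ = r (x - y) := by rw [show (x - a) - (y - a) = x - y by abel]
  have hinj : Function.Injective H := by
    intro x y hxy
    simp only [hH] at hxy
    have hsub : x - y = (f y - f x) • d := by
      rw [sub_smul]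
      linear_combination (norm := module) hxy
    have h1 : r (x - y) = |f y - f x| * L := by rw [hsub, hsmul]
    have h2 : |f y - f x| ≤ r (x - y) := by rw [abs_sub_comm]; exact hflip x y
    have h3 : |f y - f x| ≤ |f y - f x| * L := h1 ▸ h2
    have h4 : |f y - f x| = 0 := by nlinarith [abs_nonneg (f y - f x)]
    have h5 : x - y = 0 := by rw [hsub, abs_eq_zero.mp h4, zero_smul]
    exact sub_eq_zero.mp h5
  -- unique fixed point used to define the inverse
  have hexu : ∀ y : X, ∃! c : ℝ, phi (r (y - c • d - a)) = c := by
    intro y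
    have hcont : ContinuousOn (fun c : ℝ => phi (r (y - c • d - a)) - c) (Icc 0 1) := by
      apply Continuous.continuousOn
      exact ((continuous_phi.comp (hr.comp (by fun_prop))).sub continuous_id)
    obtain ⟨c, hc01, hc⟩ : ∃ c ∈ Icc (0:ℝ) 1, phi (r (y - c • d - a)) - c = 0 := by
      have h0 : (0:ℝ) ≤ phi (r (y - (0:ℝ) • d - a)) - 0 := by
        simpa using phi_nonneg _
      have h1 : phi (r (y - (1:ℝ) • d - a)) - 1 ≤ 0 := by
        have := phi_le_one (hrnn (y - (1:ℝ) • d - a)); linarith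
      have := intermediate_value_Icc' (by norm_num : (0:ℝ) ≤ 1) hcont
      have hmem : (0:ℝ) ∈ Icc (phi (r (y - (1:ℝ) • d - a)) - 1)
          (phi (r (y - (0:ℝ) • d - a)) - 0) := ⟨h1, h0⟩
      obtain ⟨c, hc, hceq⟩ := this hmem
      exact ⟨c, hc, hceq⟩
    have hcc : phi (r (y - c • d - a)) = c := by linarith
    refine ⟨c, hcc, ?_⟩
    intro c' hc'
    have hdiff := phi_lip (r (y - c' • d - a)) (r (y - c • d - a))
    rw [hc', hcc] at hdiff
    have h2 : |r (y - c' • d - a) - r (y - c • d - a)| ≤ r ((c - c') • d) := by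
      have := hrdiff (y - c' • d - a) (y - c • d - a)
      rw [show (y - c' • d - a) - (y - c • d - a) = (c - c') • d by
        rw [sub_smul]; abel] at this
      exact this
    rw [hsmul] at h2
    have h3 : |c' - c| ≤ |c - c'| * L := le_trans hdiff h2
    rw [abs_sub_comm c c'] at h3
    have h4 : |c' - c| = 0 := by nlinarith [abs_nonneg (c' - c)]
    have h5 := abs_eq_zero.mp h4
    linarith
  classical
  set cf : X → ℝ := fun y => (hexu y).choose with hcfdef
  have hcf : ∀ y, phi (r (y - cf y • d - a)) = cf y := fun y => (hexu y).choose_spec.1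
  have hcfu : ∀ y c', phi (r (y - c' • d - a)) = c' → c' = cf y :=
    fun y => (hexu y).choose_spec.2
  set g : X → X := fun y => y - cf y • d with hg
  have hHg : ∀ y, H (g y) = y := by
    intro y
    have h1 : f (g y) = cf y := by
      simp only [hf, hg]
      exact hcf y
    simp only [hH]; rw [h1]; simp only [hg]
    abel
  have hgH : ∀ x, g (H x) = x := by
    intro x
    have h1 : phi (r (H x - f x • d - a)) = f x := by
      have e : H x - f x • d = x := by simp only [hH]; abel
      rw [e]
    have h2 := hcfu (H x) (f x) h1
    simp only [hg]; rw [← h2]; simp only [hH]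
    abel
  have hcflip : ∀ y y', |cf y - cf y'| * (1 - L) ≤ r (y - y') := by
    intro y y'
    have h := phi_lip (r (y - cf y • d - a)) (r (y' - cf y' • d - a))
    rw [hcf, hcf] at h
    have h2 : |r (y - cf y • d - a) - r (y' - cf y' • d - a)| ≤
        r ((y - y') + (cf y' - cf y) • d) := by
      have := hrdiff (y - cf y • d - a) (y' - cf y' • d - a)
      rw [show (y - cf y • d - a) - (y' - cf y' • d - a)
        = (y - y') + (cf y' - cf y) • d by rw [sub_smul]; abel] at this
      exact this
    have h3 : r ((y - y') + (cf y' - cf y) • d) ≤ r (y - y') + |cf y' - cf y| * L := by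
      have := hadd (y - y') ((cf y' - cf y) • d)
      rw [hsmul] at this
      exact this
    rw [abs_sub_comm (cf y') (cf y)] at h3
    have := le_trans h (le_trans h2 h3)
    nlinarith
  have hcfcont : Continuous cf := by
    rw [continuous_iff_continuousAt]
    intro y₀
    rw [ContinuousAt, tendsto_iff_norm_sub_tendsto_zero]
    have hL1 : 0 < 1 - L := by linarith
    have key : ∀ y, ‖cf y - cf y₀‖ ≤ (1 - L)⁻¹ * r (y - y₀) := by
      intro y
      have := hcflip y y₀
      rw [Real.norm_eq_abs]
      rw [le_inv_mul_iff₀ hL1]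
      nlinarith
    apply squeeze_zero (fun y => norm_nonneg _) key
    have hc2 : Continuous fun y => r (y - y₀) := hr.comp (continuous_id.sub continuous_const)
    have h0 : r (y₀ - y₀) = 0 := by rw [sub_self, hr0]
    have ht : Tendsto (fun y => r (y - y₀)) (𝓝 y₀) (𝓝 0) := by
      simpa [sub_self, hr0] using hc2.tendsto y₀
    simpa using ht.const_mul ((1 - L)⁻¹)
  have hHcont : Continuous H := by
    apply continuous_id.add
    exact (continuous_phi.comp (hr.comp (continuous_id.sub continuous_const))).smul
      continuous_const
  have hgcont : Continuous g := continuous_id.sub (hcfcont.smul continuous_const)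
  have hfix : ∀ x, 1 ≤ r (x - a) → H x = x := by
    intro x hx
    simp only [hH, hf, phi_of_one_le hx, zero_smul, add_zero]
  refine ⟨⟨⟨H, g, hgH, hHg⟩, hHcont, hgcont⟩, ?_, hfix, ?_⟩
  · show H a = b
    simp only [hH, hf, sub_self, hr0, phi_zero, one_smul, hd]
    abel
  · intro x hx
    show r (H x - a) < 1
    by_contra hcon
    push_neg at hcon
    have h2 : H x = x := hinj (hfix _ hcon)
    rw [h2] at hcon
    exact absurd hx (not_lt.mpr hcon)




noncomputable def compList (l : List (X ≃ₜ X)) : X ≃ₜ X :=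
  l.foldl Homeomorph.trans (Homeomorph.refl X)

lemma foldl_trans_apply (l : List (X ≃ₜ X)) (init : X ≃ₜ X) (x : X) :
    (l.foldl Homeomorph.trans init) x = l.foldl (fun y m => m y) (init x) := by
  induction l generalizing init with
  | nil => rfl
  | cons m t ih =>
    simp only [List.foldl_cons]
    rw [ih]
    rfl

lemma compList_cons_apply (m : X ≃ₜ X) (l : List (X ≃ₜ X)) (x : X) :
    compList (m :: l) x = compList l (m x) := by
  unfold compList
  rw [foldl_trans_apply, foldl_trans_apply]
  rfl

noncomputable def compPairs (l : List ((X ≃ₜ X) × Set X)) : X ≃ₜ X :=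
  compList (l.map Prod.fst)

lemma compPairs_cons_apply (p : (X ≃ₜ X) × Set X) (l : List ((X ≃ₜ X) × Set X)) (x : X) :
    compPairs (p :: l) x = compPairs l (p.1 x) := by
  unfold compPairs
  rw [List.map_cons, compList_cons_apply]

lemma compPairs_fix (l : List ((X ≃ₜ X) × Set X))
    (hsupp : ∀ p ∈ l, ∀ x, x ∉ p.2 → p.1 x = x)
    (x : X) (hx : ∀ p ∈ l, x ∉ p.2) : compPairs l x = x := by
  induction l with
  | nil => rfl
  | cons p t ih =>
    rw [compPairs_cons_apply, hsupp p (by simp) x (hx p (by simp))]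
    exact ih (fun q hq => hsupp q (by simp [hq])) (fun q hq => hx q (by simp [hq]))

lemma compPairs_eq_of_mem (l : List ((X ≃ₜ X) × Set X))
    (hsupp : ∀ p ∈ l, ∀ x, x ∉ p.2 → p.1 x = x)
    (hin : ∀ p ∈ l, ∀ x, x ∈ p.2 → p.1 x ∈ p.2)
    (hdisj : l.Pairwise (fun p q => Disjoint p.2 q.2))
    (p : (X ≃ₜ X) × Set X) (hp : p ∈ l) (x : X) (hx : x ∈ p.2) :
    compPairs l x = p.1 x := by
  induction l with
  | nil => exact absurd hp (by simp)
  | cons q t ih =>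
    rcases List.mem_cons.mp hp with h | h
    · subst h
      rw [compPairs_cons_apply]
      apply compPairs_fix t (fun q hq => hsupp q (by simp [hq]))
      intro q hq
      have hd := (List.pairwise_cons.mp hdisj).1 q hq
      exact fun hmem => (hd.ne_of_mem (hin p (by simp) x hx) hmem) rfl
    · rw [compPairs_cons_apply]
      have hxq : x ∉ q.2 := by
        have hd := (List.pairwise_cons.mp hdisj).1 p h
        exact fun hmem => (hd.ne_of_mem hmem hx) rfl
      rw [hsupp q (by simp) x hxq]
      exact ih (fun q hq => hsupp q (by simp [hq])) (fun q hq => hin q (by simp [hq]))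
        (List.pairwise_cons.mp hdisj).2 h
lemma compPairs_cases (l : List ((X ≃ₜ X) × Set X))
    (hsupp : ∀ p ∈ l, ∀ x, x ∉ p.2 → p.1 x = x)
    (hin : ∀ p ∈ l, ∀ x, x ∈ p.2 → p.1 x ∈ p.2)
    (hdisj : l.Pairwise (fun p q => Disjoint p.2 q.2)) (x : X) :
    compPairs l x = x ∨ ∃ p ∈ l, x ∈ p.2 ∧ compPairs l x ∈ p.2 := by
  classical
  by_cases h : ∃ p ∈ l, x ∈ p.2
  · obtain ⟨p, hp, hx⟩ := h
    right
    refine ⟨p, hp, hx, ?_⟩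
    rw [compPairs_eq_of_mem l hsupp hin hdisj p hp x hx]
    exact hin p hp x hx
  · push_neg at h
    exact Or.inl (compPairs_fix l hsupp x h)

lemma exists_chain (r : X → ℝ) (hr : Continuous r)
    (hadd : ∀ x y, r (x + y) ≤ r x + r y)
    (hsmul : ∀ (c : ℝ) (x : X), r (c • x) = |c| * r x)
    (T : Set X) (x0 : X) (xs : List X)
    (hchain : List.Chain (fun u v => r (v - u) < 1) x0 xs)
    (hballs : ∀ u ∈ x0 :: xs, ∀ x, r (x - u) < 1 → x ∈ T) :
    ∃ H : X ≃ₜ X, H x0 = xs.getLastD x0 ∧ (∀ x, x ∉ T → H x = x) ∧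
      (∀ x, x ∈ T → H x ∈ T) := by
  induction xs generalizing x0 with
  | nil =>
    exact ⟨Homeomorph.refl X, rfl, fun _ _ => rfl, fun x hx => hx⟩
  | cons y t ih =>
    obtain ⟨hxy, hchain'⟩ := List.chain_cons.mp hchain
    obtain ⟨M, hMa, hMfix, hMball⟩ := exists_move r hr hadd hsmul x0 y hxy
    obtain ⟨H', hH'1, hH'2, hH'3⟩ := ih y hchain'
      (fun u hu => hballs u (by simp only [List.mem_cons] at hu ⊢; tauto))
    refine ⟨M.trans H', ?_, ?_, ?_⟩
    · rw [List.getLastD_cons]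
      show H' (M x0) = t.getLastD y
      rw [hMa, hH'1]
    · intro x hx
      show H' (M x) = x
      have hfix : M x = x := by
        apply hMfix
        by_contra hcon
        push_neg at hcon
        exact hx (hballs x0 (by simp) x hcon)
      rw [hfix]
      exact hH'2 x hx
    · intro x hx
      show H' (M x) ∈ T
      apply hH'3
      by_cases hb : r (x - x0) < 1
      · exact hballs x0 (by simp) _ (hMball x hb)
      · push_neg at hb
        rw [hMfix x hb]; exact hx



/-- affine subspace through `y` spanned by directions `u, v` (possibly `0`). -/
def aff (y u v : X) : Set X := {x | x - y ∈ (Submodule.span ℝ ({u, v} : Set X) : Set X)}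

lemma self_mem_aff (y u v : X) : y ∈ aff y u v := by
  simp only [aff, mem_setOf_eq, sub_self]
  exact Submodule.zero_mem _

lemma aff_isClosed [T2Space X] (y u v : X) : IsClosed (aff y u v) := by
  have : FiniteDimensional ℝ (Submodule.span ℝ ({u, v} : Set X)) :=
    FiniteDimensional.span_of_finite ℝ (by simp : ({u, v} : Set X).Finite)
  have hcl : IsClosed ((Submodule.span ℝ ({u, v} : Set X) : Set X)) :=
    Submodule.closed_of_finiteDimensional _
  exact hcl.preimage (continuous_id.sub continuous_const)

lemma aff_interior_empty [T2Space X] (hdim : 3 ≤ Module.rank ℝ X) (y u v : X) :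
    interior (aff y u v) = ∅ := by
  by_contra hne
  rw [← Set.not_nonempty_iff_eq_empty, not_not] at hne
  have e : aff y u v = (Homeomorph.subRight y) ⁻¹' (Submodule.span ℝ ({u, v} : Set X) : Set X) :=
    rfl
  rw [e, ← Homeomorph.preimage_interior] at hne
  obtain ⟨x, hx⟩ := hne
  have hSne : (interior ((Submodule.span ℝ ({u, v} : Set X) : Set X))).Nonempty := ⟨_, hx⟩
  haveI : (𝓝[{ x : ℝ | IsUnit x }] (0:ℝ)).NeBot := by
    have : { x : ℝ | IsUnit x } = {(0:ℝ)}ᶜ := by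
      ext z; simp [isUnit_iff_ne_zero]
    rw [this]
    exact NormedField.nhdsNE_neBot 0
  have htop := Submodule.eq_top_of_nonempty_interior' _ hSne
  have h1 : Module.rank ℝ (Submodule.span ℝ ({u, v} : Set X)) ≤ 2 := by
    have := rank_span_le (R := ℝ) ({u, v} : Set X)
    calc Module.rank ℝ (Submodule.span ℝ ({u, v} : Set X)) ≤ #({u, v} : Set X) := this
      _ ≤ 2 := by
        have h2 := Cardinal.mk_insert_le (α := X) (s := ({v} : Set X)) (a := u)
        have h3 : #({v} : Set X) = 1 := Cardinal.mk_singleton v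
        rw [h3] at h2
        exact le_trans h2 (by norm_num)
  rw [htop, rank_top] at h1
  have := le_trans hdim h1
  norm_num at this

lemma exists_avoiding (G : Set X) (hG : IsOpen G) (hne : G.Nonempty)
    (bad : List (Set X)) (hbad : ∀ s ∈ bad, IsClosed s ∧ interior s = ∅) :
    ∃ x ∈ G, ∀ s ∈ bad, x ∉ s := by
  induction bad generalizing G with
  | nil => obtain ⟨x, hx⟩ := hne; exact ⟨x, hx, by simp⟩
  | cons s t ih =>
    have hG' : IsOpen (G \ s) := hG.sdiff (hbad s (by simp)).1
    have hne' : (G \ s).Nonempty := by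
      by_contra hcon
      rw [Set.not_nonempty_iff_eq_empty, Set.diff_eq_empty] at hcon
      obtain ⟨x, hx⟩ := hne
      have : x ∈ interior s := (hG.subset_interior_iff.mpr hcon) hx
      rw [(hbad s (by simp)).2] at this
      exact this
    obtain ⟨x, hx, hxt⟩ := ih (G \ s) hG' hne'
      (fun u hu => hbad u (by simp [hu]))
    exact ⟨x, hx.1, fun u hu => by
      rcases List.mem_cons.mp hu with h | h
      · subst h; exact hx.2
      · exact hxt u h⟩

lemma seg_avoid_pt {Abase c s : X} (hs : s ≠ Abase) (hc : c ∉ aff Abase (s - Abase) 0) :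
    s ∉ segment ℝ Abase c := by
  intro hmem
  rw [segment_eq_image'] at hmem
  obtain ⟨t, ht, hts⟩ := hmem
  have ht0 : t ≠ 0 := by
    rintro rfl
    simp only [zero_smul, add_zero] at hts
    exact hs hts.symm
  apply hc
  show c - Abase ∈ (Submodule.span ℝ ({s - Abase, 0} : Set X) : Set X)
  have he : c - Abase = t⁻¹ • (s - Abase) := by
    have : s - Abase = t • (c - Abase) := by rw [← hts]; simp
    rw [this, smul_smul, inv_mul_cancel₀ ht0, one_smul]
  rw [he]
  exact Submodule.smul_mem _ _ (Submodule.subset_span (by simp))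

lemma seg_avoid_seg {Abase c u v : X} (hA : Abase ∉ segment ℝ u v)
    (hc : c ∉ aff Abase (u - Abase) (v - Abase)) :
    Disjoint (segment ℝ Abase c) (segment ℝ u v) := by
  rw [Set.disjoint_left]
  intro z hz1 hz2
  rw [segment_eq_image'] at hz1
  obtain ⟨t, ht, htz⟩ := hz1
  have ht0 : t ≠ 0 := by
    rintro rfl
    simp only [zero_smul, add_zero] at htz
    exact hA (htz ▸ hz2)
  apply hc
  show c - Abase ∈ (Submodule.span ℝ ({u - Abase, v - Abase} : Set X) : Set X)
  have hz : z - Abase ∈ (Submodule.span ℝ ({u - Abase, v - Abase} : Set X) : Set X) := by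
    obtain ⟨α, β, hα, hβ, hαβ, hz⟩ := hz2
    have : z - Abase = α • (u - Abase) + β • (v - Abase) := by
      rw [← hz]
      linear_combination (norm := module) hαβ • Abase
    rw [this]
    exact Submodule.add_mem _
      (Submodule.smul_mem _ _ (Submodule.subset_span (by simp)))
      (Submodule.smul_mem _ _ (Submodule.subset_span (by simp)))
  have he : c - Abase = t⁻¹ • (z - Abase) := by
    have : z - Abase = t • (c - Abase) := by rw [← htz]; simp
    rw [this, smul_smul, inv_mul_cancel₀ ht0, one_smul]
  rw [he]
  exact Submodule.smul_mem _ _ hz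



lemma exists_walk_aux (r : X → ℝ) (w : X) (hw : r w < 1) :
    ∀ (m : ℕ) (u : X), ∃ xs : List X, List.Chain (fun p q => r (q - p) < 1) u xs ∧
      xs.getLastD u = u + (m : ℝ) • w ∧
      ∀ z ∈ u :: xs, ∃ s : ℕ, s ≤ m ∧ z = u + (s : ℝ) • w := by
  intro m
  induction m with
  | zero =>
    intro u
    exact ⟨[], List.Chain.nil, by simp, by
      intro z hz
      simp only [List.mem_singleton] at hz
      exact ⟨0, le_refl _, by simp [hz]⟩⟩
  | succ m ih =>
    intro u
    obtain ⟨xs', h1, h2, h3⟩ := ih (u + w)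
    refine ⟨(u + w) :: xs', ?_, ?_, ?_⟩
    · apply List.chain_cons.mpr
      exact ⟨by simpa using hw, h1⟩
    · rw [List.getLastD_cons, h2]
      push_cast
      module
    · intro z hz
      rcases List.mem_cons.mp hz with h | h
      · exact ⟨0, by omega, by simp [h]⟩
      · obtain ⟨s, hs, hz'⟩ := h3 z h
        refine ⟨s + 1, by omega, ?_⟩
        rw [hz']
        push_cast
        module

lemma exists_walk (r : X → ℝ) (hsmul : ∀ (c : ℝ) (x : X), r (c • x) = |c| * r x)
    (hnn : ∀ x, 0 ≤ r x) (u v : X) :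
    ∃ xs : List X, List.Chain (fun p q => r (q - p) < 1) u xs ∧ xs.getLastD u = v ∧
      ∀ z ∈ u :: xs, z ∈ segment ℝ u v := by
  set n : ℕ := ⌊r (v - u)⌋₊ + 1 with hn
  have hnpos : 0 < (n : ℝ) := by positivity
  set w : X := (n : ℝ)⁻¹ • (v - u) with hwdef
  have hw : r w < 1 := by
    rw [hwdef, hsmul, abs_of_pos (by positivity)]
    rw [inv_mul_lt_iff₀ hnpos, mul_one]
    calc r (v - u) < ↑(⌊r (v - u)⌋₊ + 1) := by
          push_cast; exact Nat.lt_floor_add_one _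
      _ = (n : ℝ) := by rw [hn]
  obtain ⟨xs, h1, h2, h3⟩ := exists_walk_aux r w hw n u
  refine ⟨xs, h1, ?_, ?_⟩
  · rw [h2, hwdef, smul_smul, mul_inv_cancel₀ (ne_of_gt hnpos), one_smul]
    abel
  · intro z hz
    obtain ⟨s, hs, hz'⟩ := h3 z hz
    rw [segment_eq_image']
    refine ⟨(s : ℝ) / n, ⟨by positivity, ?_⟩, ?_⟩
    · rw [div_le_one hnpos]
      exact_mod_cast hs
    · rw [hz', hwdef, smul_smul]
      rw [div_eq_mul_inv]

lemma gauge_pkg (M : Set X) (hM : M ∈ 𝓝 0) (hMc : Convex ℝ M) (hMs : ∀ x ∈ M, -x ∈ M) :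
    Continuous (gauge M) ∧ (∀ x y, gauge M (x + y) ≤ gauge M x + gauge M y) ∧
      (∀ (c : ℝ) (x : X), gauge M (c • x) = |c| * gauge M x) ∧
      (∀ x, gauge M x < 1 → x ∈ M) := by
  have habs : Absorbent ℝ M := absorbent_nhds_zero hM
  refine ⟨continuous_gauge hMc hM, fun x y => gauge_add_le hMc habs x y, ?_, ?_⟩
  · intro c x
    rcases le_or_gt 0 c with hc | hc
    · rw [gauge_smul_of_nonneg hc, abs_of_nonneg hc, smul_eq_mul]
    · have he : c • x = -((-c) • x) := by module
      rw [he, gauge_neg hMs, gauge_smul_of_nonneg (by linarith), smul_eq_mul, abs_of_neg hc]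
  · intro x hx
    exact gauge_lt_one_subset_self hMc (mem_of_mem_nhds hM) habs hx

lemma thicken_subset {K U : Set X} (hK : IsCompact K) (hU : IsOpen U) (hKU : K ⊆ U) :
    ∃ N ∈ 𝓝 (0 : X), ∀ x ∈ K, ∀ y, y - x ∈ N → y ∈ U := by
  obtain ⟨V, hV, hKV⟩ := compact_open_separated_add_right hK hU hKU
  refine ⟨V, hV, fun x hx y hy => hKV ?_⟩
  exact ⟨x, hx, y - x, hy, by module⟩

lemma thicken_disjoint [T2Space X] {K L : Set X} (hK : IsCompact K) (hL : IsCompact L)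
    (hd : Disjoint K L) :
    ∃ N ∈ 𝓝 (0 : X), ∀ x ∈ K, ∀ y ∈ L, ∀ z, z - x ∈ N → z - y ∉ N := by
  have hLc : IsClosed L := hL.isClosed
  have hKU : K ⊆ Lᶜ := fun x hx hxL => (Set.disjoint_left.mp hd hx) hxL
  obtain ⟨V, hV, hKV⟩ := compact_open_separated_add_right hK hLc.isOpen_compl hKU
  obtain ⟨V', hV', hVV⟩ := exists_nhds_zero_half hV
  have hnegV' : (fun x : X => -x) ⁻¹' V' ∈ 𝓝 (0 : X) :=
    (continuous_neg.tendsto' (0 : X) 0 neg_zero) hV'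
  refine ⟨V' ∩ ((fun x : X => -x) ⁻¹' V'), Filter.inter_mem hV' hnegV', ?_⟩
  intro x hx y hy z hz1 hz2
  have h1 : z - x ∈ V' := hz1.1
  have h2 : y - z ∈ V' := by
    have := hz2.2
    simpa using this
  have hsum : (z - x) + (y - z) ∈ V := hVV _ h1 _ h2
  have : y - x ∈ V := by
    rw [show (z - x) + (y - z) = y - x by abel] at hsum
    exact hsum
  have hyKV : y ∈ K + V := ⟨x, hx, y - x, this, by module⟩
  exact (hKV hyKV) hy




lemma exists_conv_symm_open [LocallyConvexSpace ℝ X] {N : Set X} (hN : N ∈ 𝓝 (0 : X)) :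
    ∃ W : Set X, (0 : X) ∈ W ∧ IsOpen W ∧ Convex ℝ W ∧ (∀ x ∈ W, -x ∈ W) ∧ W ⊆ N := by
  obtain ⟨T, ⟨hTmem, hTconv⟩, hTN⟩ := (LocallyConvexSpace.convex_basis (𝕜 := ℝ) (0 : X)).mem_iff.mp hN
  refine ⟨interior T ∩ -interior T, ?_, ?_, ?_, ?_, ?_⟩
  · constructor
    · exact mem_interior_iff_mem_nhds.mpr hTmem
    · rw [Set.mem_neg, neg_zero]
      exact mem_interior_iff_mem_nhds.mpr hTmem
  · exact isOpen_interior.inter isOpen_interior.neg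
  · exact (hTconv.interior).inter ((hTconv.interior).neg)
  · intro x hx
    constructor
    · have := hx.2
      rwa [Set.mem_neg] at this
    · rw [Set.mem_neg, neg_neg]
      exact hx.1
  · exact fun x hx => hTN (interior_subset hx.1)


end Aux

end SLMH

/-- A uniform space `Z` is strongly locally multihomogeneous: for every entourage `V` there
exists an entourage `U ⊆ V` such that for any `k ≥ 1`, any pairwise distinct points
`a₁, …, a_k` and any pairwise distinct points `b₁, …, b_k` with `(a_j, b_j) ∈ U` for all `j`,
there is a homeomorphism `h : Z → Z` with `h (a_j) = b_j` for all `j`, `h(U(a_j)) ⊆ V(a_j)`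
for all `j`, and `h x = x` for every `x` outside `U(a₁) ∪ … ∪ U(a_k)`. -/
def StronglyLocallyMultihomogeneous (Z : Type*) [UniformSpace Z] [TopologicalSpace Z] : Prop :=
  ∀ V ∈ uniformity Z, ∃ U ∈ uniformity Z, U ⊆ V ∧
    ∀ (k : ℕ), 1 ≤ k → ∀ a b : Fin k → Z, Function.Injective a → Function.Injective b →
      (∀ j : Fin k, (a j, b j) ∈ U) →
      ∃ h : Z ≃ₜ Z,
        (∀ j : Fin k, h (a j) = b j) ∧
        (∀ j : Fin k, ∀ x : Z, (a j, x) ∈ U → (a j, h x) ∈ V) ∧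
        (∀ x : Z, (∀ j : Fin k, (a j, x) ∉ U) → h x = x)

/-- Every open convex set in a locally convex space of real dimension at least three, equipped
with the uniformity induced from the space, is strongly locally multihomogeneous. -/
theorem isOpen_convex_stronglyLocallyMultihomogeneous
    {𝕂 : Type*} [RCLike 𝕂] {X : Type*} [AddCommGroup X] [Module 𝕂 X]
    [Module ℝ X] [IsScalarTower ℝ 𝕂 X]
    [UniformSpace X] [IsUniformAddGroup X] [ContinuousSMul 𝕂 X] [ContinuousSMul ℝ X]
    [LocallyConvexSpace ℝ X] [T2Space X]
    (hdim : 3 ≤ Module.rank ℝ X)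
    (C : Set X) (hC : IsOpen C) (hconv : Convex ℝ C) :
    StronglyLocallyMultihomogeneous C := by
  classical
  intro V hV
  rw [uniformity_subtype, Filter.mem_comap] at hV
  obtain ⟨V', hV', hV'sub⟩ := hV
  rw [uniformity_eq_comap_nhds_zero X, Filter.mem_comap] at hV'
  obtain ⟨N, hN, hNsub⟩ := hV'
  obtain ⟨W, hW0, hWo, hWconv, hWsym, hWN⟩ := SLMH.exists_conv_symm_open hN
  set W8 : Set X := (8:ℝ)⁻¹ • W with hW8def
  have hW8o : IsOpen W8 := hWo.smul₀ (by norm_num)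
  have hW80 : (0:X) ∈ W8 := ⟨0, hW0, smul_zero _⟩
  have hW8mem : W8 ∈ 𝓝 (0:X) := hW8o.mem_nhds hW80
  have hW8conv : Convex ℝ W8 := hWconv.smul _
  have hW8sym : ∀ x ∈ W8, -x ∈ W8 := by
    rintro x ⟨w, hw, rfl⟩
    exact ⟨-w, hWsym w hw, by simp⟩
  have hW8W : W8 ⊆ W := by
    rintro x ⟨w, hw, rfl⟩
    exact hWconv.smul_mem_of_zero_mem hW0 hw ⟨by norm_num, by norm_num⟩
  have hsum5 : ∀ u1 u2 u3 u4 u5 : X, u1 ∈ W8 → u2 ∈ W8 → u3 ∈ W8 → u4 ∈ W8 → u5 ∈ W8 →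
      u1 + u2 + u3 + u4 + u5 ∈ W := by
    intro u1 u2 u3 u4 u5 h1 h2 h3 h4 h5
    have hstep : ∀ (p q : ℝ) (x y : X), 0 ≤ p → 0 ≤ q → x ∈ p • W → y ∈ q • W →
        x + y ∈ (p + q) • W := by
      intro p q x y hp hq hx hy
      rw [hWconv.add_smul hp hq]
      exact Set.add_mem_add hx hy
    have h12 := hstep _ _ _ _ (by norm_num) (by norm_num) h1 h2
    have h123 := hstep _ _ _ _ (by positivity) (by norm_num) h12 h3
    have h1234 := hstep _ _ _ _ (by positivity) (by norm_num) h123 h4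
    have h12345 := hstep _ _ _ _ (by positivity) (by norm_num) h1234 h5
    obtain ⟨w, hw, hwe⟩ := h12345
    rw [← hwe]
    exact hWconv.smul_mem_of_zero_mem hW0 hw ⟨by norm_num, by norm_num⟩
  set U : Set (↥C × ↥C) := {q | (q.2 : X) - (q.1 : X) ∈ W8} with hUdef
  have hUuni : U ∈ uniformity ↥C := by
    rw [uniformity_subtype, Filter.mem_comap]
    refine ⟨{p : X × X | p.2 - p.1 ∈ W8}, ?_, fun q hq => hq⟩
    rw [uniformity_eq_comap_nhds_zero X]
    exact Filter.preimage_mem_comap hW8mem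
  have hUV : U ⊆ V := by
    intro q hq
    apply hV'sub
    exact hNsub (hWN (hW8W hq))
  refine ⟨U, hUuni, hUV, ?_⟩
  intro k hk a b hainj hbinj habU
  set A : Fin k → X := fun j => ((a j : X)) with hA
  set B : Fin k → X := fun j => ((b j : X)) with hB
  have hAinj : Function.Injective A := fun i j h => hainj (Subtype.ext h)
  have hBinj : Function.Injective B := fun i j h => hbinj (Subtype.ext h)
  have hABW8 : ∀ j, B j - A j ∈ W8 := fun j => habU j
  set D : Fin k → Set X := fun i => {x | x ∈ C ∧ x - A i ∈ W8} with hD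
  have hDo : ∀ i, IsOpen (D i) := by
    intro i
    have : D i = C ∩ (fun x => x - A i) ⁻¹' W8 := rfl
    rw [this]
    exact hC.inter (hW8o.preimage (continuous_id.sub continuous_const))
  have hDconv : ∀ i, Convex ℝ (D i) := by
    intro i x hx y hy α β hα hβ hαβ
    refine ⟨hconv hx.1 hy.1 hα hβ hαβ, ?_⟩
    have he : (α • x + β • y) - A i = α • (x - A i) + β • (y - A i) := by
      linear_combination (norm := module) hαβ • (A i)
    rw [he]
    exact hW8conv hx.2 hy.2 hα hβ hαβ
  have hADi : ∀ i, A i ∈ D i := fun i => ⟨(a i).2, by rw [sub_self]; exact hW80⟩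
  have hBDi : ∀ i, B i ∈ D i := fun i => ⟨(b i).2, hABW8 i⟩
  have hDC : ∀ i, D i ⊆ C := fun i x hx => hx.1
  -- sequential generic choice of intermediate points
  have hchoice : ∀ n : ℕ, ∃ c : Fin k → X, ∀ i : Fin k, (i : ℕ) < n →
      (c i ∈ D i ∧
       (∀ l, c i ∉ SLMH.aff (A i) (A l - A i) 0) ∧
       (∀ l, c i ∉ SLMH.aff (B i) (B l - B i) 0) ∧
       (∀ l, l < i → c i ∉ SLMH.aff (A i) (A l - A i) (c l - A i)) ∧
       (∀ l, l < i → c i ∉ SLMH.aff (B i) (c l - B i) (B l - B i))) := by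
    intro n
    induction n with
    | zero => exact ⟨A, fun i hi => absurd hi (by omega)⟩
    | succ n ih =>
      obtain ⟨c, hcold⟩ := ih
      by_cases hnk : n < k
      · set i0 : Fin k := ⟨n, hnk⟩ with hi0
        set bad : List (Set X) :=
          (List.ofFn fun l : Fin k => SLMH.aff (A i0) (A l - A i0) 0) ++
          (List.ofFn fun l : Fin k => SLMH.aff (B i0) (B l - B i0) 0) ++
          (List.ofFn fun l : Fin k => SLMH.aff (A i0) (A l - A i0) (c l - A i0)) ++
          (List.ofFn fun l : Fin k => SLMH.aff (B i0) (c l - B i0) (B l - B i0)) with hbaddef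
        have hbadprop : ∀ s ∈ bad, IsClosed s ∧ interior s = ∅ := by
          intro s hs
          simp only [hbaddef, List.mem_append, List.mem_ofFn] at hs
          rcases hs with ((⟨l, rfl⟩ | ⟨l, rfl⟩) | ⟨l, rfl⟩) | ⟨l, rfl⟩ <;>
            exact ⟨SLMH.aff_isClosed _ _ _, SLMH.aff_interior_empty hdim _ _ _⟩
        obtain ⟨x, hxD, hxbad⟩ :=
          SLMH.exists_avoiding (D i0) (hDo i0) ⟨A i0, hADi i0⟩ bad hbadprop
        have hbm1 : ∀ l : Fin k, SLMH.aff (A i0) (A l - A i0) 0 ∈ bad := by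
          intro l
          simp only [hbaddef, List.mem_append, List.mem_ofFn]
          exact Or.inl (Or.inl (Or.inl ⟨l, rfl⟩))
        have hbm2 : ∀ l : Fin k, SLMH.aff (B i0) (B l - B i0) 0 ∈ bad := by
          intro l
          simp only [hbaddef, List.mem_append, List.mem_ofFn]
          exact Or.inl (Or.inl (Or.inr ⟨l, rfl⟩))
        have hbm3 : ∀ l : Fin k, SLMH.aff (A i0) (A l - A i0) (c l - A i0) ∈ bad := by
          intro l
          simp only [hbaddef, List.mem_append, List.mem_ofFn]
          exact Or.inl (Or.inr ⟨l, rfl⟩)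
        have hbm4 : ∀ l : Fin k, SLMH.aff (B i0) (c l - B i0) (B l - B i0) ∈ bad := by
          intro l
          simp only [hbaddef, List.mem_append, List.mem_ofFn]
          exact Or.inr ⟨l, rfl⟩
        refine ⟨Function.update c i0 x, ?_⟩
        intro i hi
        rcases Nat.lt_succ_iff_lt_or_eq.mp hi with hi' | hi'
        · have hneq : i ≠ i0 := by
            intro h
            rw [h] at hi'
            simp only [hi0] at hi'
            omega
          have hval : Function.update c i0 x i = c i := Function.update_of_ne hneq _ _
          obtain ⟨h1, h2, h3, h4, h5⟩ := hcold i hi'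
          refine ⟨by rwa [hval], by rwa [hval], by rwa [hval], ?_, ?_⟩
          · intro l hl
            have hlneq : l ≠ i0 := by
              intro h
              rw [h] at hl
              have : (i0 : ℕ) < i := hl
              simp only [hi0] at this
              omega
            rw [hval, Function.update_of_ne hlneq]
            exact h4 l hl
          · intro l hl
            have hlneq : l ≠ i0 := by
              intro h
              rw [h] at hl
              have : (i0 : ℕ) < i := hl
              simp only [hi0] at this
              omega
            rw [hval, Function.update_of_ne hlneq]
            exact h5 l hl
        · have hieq : i = i0 := Fin.ext hi'
          subst hieq
          have hval : Function.update c i0 x i0 = x := Function.update_self _ _ _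
          refine ⟨by rwa [hval], ?_, ?_, ?_, ?_⟩
          · intro l
            rw [hval]
            exact hxbad _ (hbm1 l)
          · intro l
            rw [hval]
            exact hxbad _ (hbm2 l)
          · intro l hl
            have hlneq : l ≠ i0 := ne_of_lt hl
            rw [hval, Function.update_of_ne hlneq]
            exact hxbad _ (hbm3 l)
          · intro l hl
            have hlneq : l ≠ i0 := ne_of_lt hl
            rw [hval, Function.update_of_ne hlneq]
            exact hxbad _ (hbm4 l)
      · exact ⟨c, fun i hi => hcold i (by omega)⟩
  obtain ⟨c, hcall⟩ := hchoice k
  have hcD : ∀ i, c i ∈ D i := fun i => (hcall i i.isLt).1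
  have hcA : ∀ i l, c i ∉ SLMH.aff (A i) (A l - A i) 0 := fun i => (hcall i i.isLt).2.1
  have hcB : ∀ i l, c i ∉ SLMH.aff (B i) (B l - B i) 0 := fun i => (hcall i i.isLt).2.2.1
  have hcP1 : ∀ i l, l < i → c i ∉ SLMH.aff (A i) (A l - A i) (c l - A i) :=
    fun i => (hcall i i.isLt).2.2.2.1
  have hcP2 : ∀ i l, l < i → c i ∉ SLMH.aff (B i) (c l - B i) (B l - B i) :=
    fun i => (hcall i i.isLt).2.2.2.2
  -- paths
  set P1 : Fin k → Set X := fun i => segment ℝ (A i) (c i) with hP1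
  set P2 : Fin k → Set X := fun i => segment ℝ (c i) (B i) with hP2
  have hsegcpt : ∀ u v : X, IsCompact (segment ℝ u v) := by
    intro u v
    rw [segment_eq_image']
    exact isCompact_Icc.image (by fun_prop)
  have hP1D : ∀ i, P1 i ⊆ D i := fun i => (hDconv i).segment_subset (hADi i) (hcD i)
  have hP2D : ∀ i, P2 i ⊆ D i := fun i => (hDconv i).segment_subset (hcD i) (hBDi i)
  have key1 : ∀ i l : Fin k, l < i → Disjoint (P1 i) (P1 l) := by
    intro i l hl
    apply SLMH.seg_avoid_seg
    · exact SLMH.seg_avoid_pt (hAinj.ne (ne_of_gt hl)) (hcA l i)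
    · exact hcP1 i l hl
  have hP1disj : ∀ i l, i ≠ l → Disjoint (P1 i) (P1 l) := by
    intro i l h
    rcases lt_or_gt_of_ne h with h' | h'
    · exact (key1 l i h').symm
    · exact key1 i l h'
  have key2 : ∀ i l : Fin k, l < i → Disjoint (P2 i) (P2 l) := by
    intro i l hl
    have h1 : B i ∉ segment ℝ (c l) (B l) := by
      rw [segment_symm]
      exact SLMH.seg_avoid_pt (hBinj.ne (ne_of_gt hl)) (hcB l i)
    have h2 := SLMH.seg_avoid_seg h1 (hcP2 i l hl)
    rw [segment_symm ℝ (B i) (c i)] at h2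
    exact h2
  have hP2disj : ∀ i l, i ≠ l → Disjoint (P2 i) (P2 l) := by
    intro i l h
    rcases lt_or_gt_of_ne h with h' | h'
    · exact (key2 l i h').symm
    · exact key2 i l h'
  -- thickening neighborhoods
  have hthick1 : ∀ i, ∃ Nn ∈ 𝓝 (0:X), ∀ x ∈ P1 i, ∀ y, y - x ∈ Nn → y ∈ D i :=
    fun i => SLMH.thicken_subset (hsegcpt _ _) (hDo i) (hP1D i)
  choose N1 hN1mem hN1 using hthick1
  have hthick2 : ∀ i, ∃ Nn ∈ 𝓝 (0:X), ∀ x ∈ P2 i, ∀ y, y - x ∈ Nn → y ∈ D i :=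
    fun i => SLMH.thicken_subset (hsegcpt _ _) (hDo i) (hP2D i)
  choose N2 hN2mem hN2 using hthick2
  have hdis1 : ∀ p : Fin k × Fin k, ∃ Nn ∈ 𝓝 (0:X), p.1 ≠ p.2 →
      ∀ x ∈ P1 p.1, ∀ y ∈ P1 p.2, ∀ z, z - x ∈ Nn → z - y ∉ Nn := by
    intro p
    by_cases h : p.1 = p.2
    · exact ⟨Set.univ, Filter.univ_mem, fun hne => absurd h hne⟩
    · obtain ⟨Nn, hNm, hNd⟩ := SLMH.thicken_disjoint (hsegcpt _ _) (hsegcpt _ _)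
        (hP1disj _ _ h)
      exact ⟨Nn, hNm, fun _ => hNd⟩
  choose N3 hN3mem hN3 using hdis1
  have hdis2 : ∀ p : Fin k × Fin k, ∃ Nn ∈ 𝓝 (0:X), p.1 ≠ p.2 →
      ∀ x ∈ P2 p.1, ∀ y ∈ P2 p.2, ∀ z, z - x ∈ Nn → z - y ∉ Nn := by
    intro p
    by_cases h : p.1 = p.2
    · exact ⟨Set.univ, Filter.univ_mem, fun hne => absurd h hne⟩
    · obtain ⟨Nn, hNm, hNd⟩ := SLMH.thicken_disjoint (hsegcpt _ _) (hsegcpt _ _)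
        (hP2disj _ _ h)
      exact ⟨Nn, hNm, fun _ => hNd⟩
  choose N4 hN4mem hN4 using hdis2
  have hMpre : ((⋂ i, N1 i) ∩ (⋂ i, N2 i)) ∩ ((⋂ p, N3 p) ∩ (⋂ p, N4 p)) ∈ 𝓝 (0:X) := by
    refine Filter.inter_mem (Filter.inter_mem ?_ ?_) (Filter.inter_mem ?_ ?_) <;>
      rw [Filter.iInter_mem]
    exacts [hN1mem, hN2mem, hN3mem, hN4mem]
  obtain ⟨M, hM0, hMo, hMconv, hMsym, hMsub⟩ := SLMH.exists_conv_symm_open hMpre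
  have hMN1 : ∀ i, M ⊆ N1 i := fun i x hx => mem_iInter.mp (hMsub hx).1.1 i
  have hMN2 : ∀ i, M ⊆ N2 i := fun i x hx => mem_iInter.mp (hMsub hx).1.2 i
  have hMN3 : ∀ p, M ⊆ N3 p := fun p x hx => mem_iInter.mp (hMsub hx).2.1 p
  have hMN4 : ∀ p, M ⊆ N4 p := fun p x hx => mem_iInter.mp (hMsub hx).2.2 p
  obtain ⟨hrcont, hradd, hrsmul, hrball⟩ :=
    SLMH.gauge_pkg M (hMo.mem_nhds hM0) hMconv hMsym
  set r : X → ℝ := gauge M with hrdef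
  have hrnn : ∀ x, 0 ≤ r x := fun x => gauge_nonneg x
  have hr0 : r 0 = 0 := gauge_zero
  -- tubes
  set Tub1 : Fin k → Set X := fun i => {x | ∃ y ∈ P1 i, r (x - y) < 1} with hTub1
  set Tub2 : Fin k → Set X := fun i => {x | ∃ y ∈ P2 i, r (x - y) < 1} with hTub2
  have hT1D : ∀ i, Tub1 i ⊆ D i := by
    rintro i x ⟨y, hy, hxy⟩
    exact hN1 i y hy x (hMN1 i (hrball _ hxy))
  have hT2D : ∀ i, Tub2 i ⊆ D i := by
    rintro i x ⟨y, hy, hxy⟩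
    exact hN2 i y hy x (hMN2 i (hrball _ hxy))
  have hT1disj : ∀ i l, i ≠ l → Disjoint (Tub1 i) (Tub1 l) := by
    intro i l h
    rw [Set.disjoint_left]
    rintro z ⟨y, hy, hzy⟩ ⟨y', hy', hzy'⟩
    exact hN3 (i, l) h y hy y' hy' z (hMN3 (i, l) (hrball _ hzy)) (hMN3 (i, l) (hrball _ hzy'))
  have hT2disj : ∀ i l, i ≠ l → Disjoint (Tub2 i) (Tub2 l) := by
    intro i l h
    rw [Set.disjoint_left]
    rintro z ⟨y, hy, hzy⟩ ⟨y', hy', hzy'⟩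
    exact hN4 (i, l) h y hy y' hy' z (hMN4 (i, l) (hrball _ hzy)) (hMN4 (i, l) (hrball _ hzy'))
  have hP1T1 : ∀ i, P1 i ⊆ Tub1 i := by
    intro i y hy
    exact ⟨y, hy, by rw [sub_self, hr0]; norm_num⟩
  have hP2T2 : ∀ i, P2 i ⊆ Tub2 i := by
    intro i y hy
    exact ⟨y, hy, by rw [sub_self, hr0]; norm_num⟩
  -- phase homeomorphisms
  have hH1ex : ∀ i, ∃ H : X ≃ₜ X, H (A i) = c i ∧ (∀ x, x ∉ Tub1 i → H x = x) ∧
      (∀ x, x ∈ Tub1 i → H x ∈ Tub1 i) := by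
    intro i
    obtain ⟨xs, hch, hlast, hmem⟩ := SLMH.exists_walk r hrsmul hrnn (A i) (c i)
    obtain ⟨H, h1, h2, h3⟩ := SLMH.exists_chain r hrcont hradd hrsmul (Tub1 i) (A i) xs hch
      (fun u hu x hx => ⟨u, hmem u hu, hx⟩)
    exact ⟨H, by rw [h1, hlast], h2, h3⟩
  choose H1 hH1A hH1fix hH1in using hH1ex
  have hH2ex : ∀ i, ∃ H : X ≃ₜ X, H (c i) = B i ∧ (∀ x, x ∉ Tub2 i → H x = x) ∧
      (∀ x, x ∈ Tub2 i → H x ∈ Tub2 i) := by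
    intro i
    obtain ⟨xs, hch, hlast, hmem⟩ := SLMH.exists_walk r hrsmul hrnn (c i) (B i)
    obtain ⟨H, h1, h2, h3⟩ := SLMH.exists_chain r hrcont hradd hrsmul (Tub2 i) (c i) xs hch
      (fun u hu x hx => ⟨u, hmem u hu, hx⟩)
    exact ⟨H, by rw [h1, hlast], h2, h3⟩
  choose H2 hH2c hH2fix hH2in using hH2ex
  set list1 : List ((X ≃ₜ X) × Set X) := List.ofFn (fun i => (H1 i, Tub1 i)) with hlist1
  set list2 : List ((X ≃ₜ X) × Set X) := List.ofFn (fun i => (H2 i, Tub2 i)) with hlist2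
  have hsupp1 : ∀ p ∈ list1, ∀ x, x ∉ p.2 → p.1 x = x := by
    intro p hp
    obtain ⟨i, rfl⟩ := List.mem_ofFn.mp hp
    exact hH1fix i
  have hin1 : ∀ p ∈ list1, ∀ x, x ∈ p.2 → p.1 x ∈ p.2 := by
    intro p hp
    obtain ⟨i, rfl⟩ := List.mem_ofFn.mp hp
    exact hH1in i
  have hpw1 : list1.Pairwise (fun p q => Disjoint p.2 q.2) :=
    List.pairwise_ofFn.mpr (fun i j hij => hT1disj i j (ne_of_lt hij))
  have hsupp2 : ∀ p ∈ list2, ∀ x, x ∉ p.2 → p.1 x = x := by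
    intro p hp
    obtain ⟨i, rfl⟩ := List.mem_ofFn.mp hp
    exact hH2fix i
  have hin2 : ∀ p ∈ list2, ∀ x, x ∈ p.2 → p.1 x ∈ p.2 := by
    intro p hp
    obtain ⟨i, rfl⟩ := List.mem_ofFn.mp hp
    exact hH2in i
  have hpw2 : list2.Pairwise (fun p q => Disjoint p.2 q.2) :=
    List.pairwise_ofFn.mpr (fun i j hij => hT2disj i j (ne_of_lt hij))
  set E1 : X ≃ₜ X := SLMH.compPairs list1 with hE1def
  set E2 : X ≃ₜ X := SLMH.compPairs list2 with hE2def
  have hmem1 : ∀ i : Fin k, (H1 i, Tub1 i) ∈ list1 := by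
    intro i
    rw [hlist1, List.mem_ofFn]
    exact ⟨i, rfl⟩
  have hmem2 : ∀ i : Fin k, (H2 i, Tub2 i) ∈ list2 := by
    intro i
    rw [hlist2, List.mem_ofFn]
    exact ⟨i, rfl⟩
  have hE1A : ∀ i, E1 (A i) = c i := by
    intro i
    rw [hE1def, SLMH.compPairs_eq_of_mem list1 hsupp1 hin1 hpw1 (H1 i, Tub1 i) (hmem1 i)
      (A i) (hP1T1 i (left_mem_segment ℝ _ _))]
    exact hH1A i
  have hE2c : ∀ i, E2 (c i) = B i := by
    intro i
    rw [hE2def, SLMH.compPairs_eq_of_mem list2 hsupp2 hin2 hpw2 (H2 i, Tub2 i) (hmem2 i)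
      (c i) (hP2T2 i (left_mem_segment ℝ _ _))]
    exact hH2c i
  have hE1cases : ∀ x, E1 x = x ∨ ∃ i, x ∈ Tub1 i ∧ E1 x ∈ Tub1 i := by
    intro x
    rcases SLMH.compPairs_cases list1 hsupp1 hin1 hpw1 x with h | ⟨p, hp, h1, h2⟩
    · exact Or.inl h
    · right
      obtain ⟨i, rfl⟩ := List.mem_ofFn.mp hp
      exact ⟨i, h1, h2⟩
  have hE2cases : ∀ x, E2 x = x ∨ ∃ i, x ∈ Tub2 i ∧ E2 x ∈ Tub2 i := by
    intro x
    rcases SLMH.compPairs_cases list2 hsupp2 hin2 hpw2 x with h | ⟨p, hp, h1, h2⟩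
    · exact Or.inl h
    · right
      obtain ⟨i, rfl⟩ := List.mem_ofFn.mp hp
      exact ⟨i, h1, h2⟩
  have hE1fixD : ∀ x : X, (∀ i, x ∉ D i) → E1 x = x := by
    intro x hx
    apply SLMH.compPairs_fix list1 hsupp1
    intro p hp
    obtain ⟨i, rfl⟩ := List.mem_ofFn.mp hp
    exact fun hmem => hx i (hT1D i hmem)
  have hE2fixD : ∀ x : X, (∀ i, x ∉ D i) → E2 x = x := by
    intro x hx
    apply SLMH.compPairs_fix list2 hsupp2
    intro p hp
    obtain ⟨i, rfl⟩ := List.mem_ofFn.mp hp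
    exact fun hmem => hx i (hT2D i hmem)
  set E : X ≃ₜ X := E1.trans E2 with hEdef
  have hEapp : ∀ x, E x = E2 (E1 x) := fun x => rfl
  have hfix_notD : ∀ x : X, (∀ i, x ∉ D i) → E x = x := by
    intro x hx
    rw [hEapp, hE1fixD x hx, hE2fixD x hx]
  have hmapsC : ∀ x, x ∈ C → E x ∈ C := by
    intro x hx
    rw [hEapp]
    have h1 : E1 x ∈ C := by
      rcases hE1cases x with h | ⟨i, _, h⟩
      · rwa [h]
      · exact hDC i (hT1D i h)
    rcases hE2cases (E1 x) with h2 | ⟨i', _, h2⟩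
    · rwa [h2]
    · exact hDC i' (hT2D i' h2)
  have hmapsCinv : ∀ x, x ∈ C → E.symm x ∈ C := by
    intro x hx
    by_contra hcon
    have hfix : E (E.symm x) = E.symm x :=
      hfix_notD _ (fun i hd => hcon (hDC i hd))
    rw [E.apply_symm_apply] at hfix
    rw [← hfix] at hcon
    exact hcon hx
  refine ⟨⟨⟨fun x => ⟨E x, hmapsC x x.2⟩, fun x => ⟨E.symm x, hmapsCinv x x.2⟩,
    fun x => Subtype.ext (E.symm_apply_apply x), fun x => Subtype.ext (E.apply_symm_apply x)⟩,
    (E.continuous.comp continuous_subtype_val).subtype_mk _,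
    (E.symm.continuous.comp continuous_subtype_val).subtype_mk _⟩, ?_, ?_, ?_⟩
  · -- (a) h (a j) = b j
    intro j
    apply Subtype.ext
    show E ((a j : X)) = (b j : X)
    rw [hEapp]
    have e1 : E1 ((a j : X)) = c j := hE1A j
    rw [e1, hE2c j]
  · -- (b)
    intro j x hx
    apply hV'sub
    apply hNsub
    apply hWN
    show E ((x : X)) - ((a j : X)) ∈ W
    have hxj : (x : X) - A j ∈ W8 := hx
    rw [hEapp]
    rcases hE1cases (x : X) with h1 | ⟨i, hi1, hi2⟩
    · rw [h1]
      rcases hE2cases (x : X) with h2 | ⟨i', hi1', hi2'⟩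
      · rw [h2]
        have hs := hsum5 _ 0 0 0 0 hxj hW80 hW80 hW80 hW80
        rwa [show ((x : X) - A j) + 0 + 0 + 0 + 0 = (x : X) - A j by abel] at hs
      · have e1 : E2 (x : X) - A i' ∈ W8 := (hT2D i' hi2').2
        have e2 : A i' - (x : X) ∈ W8 := by
          have := (hT2D i' hi1').2
          have h' := hW8sym _ this
          rwa [neg_sub] at h'
        have hs := hsum5 _ _ _ 0 0 e1 e2 hxj hW80 hW80
        rwa [show (E2 (x : X) - A i') + (A i' - (x : X)) + ((x : X) - A j) + 0 + 0
          = E2 (x : X) - A j by abel] at hs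
    · have f1 : E1 (x : X) - A i ∈ W8 := (hT1D i hi2).2
      have f2 : A i - (x : X) ∈ W8 := by
        have h' := hW8sym _ (hT1D i hi1).2
        rwa [neg_sub] at h'
      rcases hE2cases (E1 (x : X)) with h2 | ⟨i', hi1', hi2'⟩
      · rw [h2]
        have hs := hsum5 _ _ _ 0 0 f1 f2 hxj hW80 hW80
        rwa [show (E1 (x : X) - A i) + (A i - (x : X)) + ((x : X) - A j) + 0 + 0
          = E1 (x : X) - A j by abel] at hs
      · have g1 : E2 (E1 (x : X)) - A i' ∈ W8 := (hT2D i' hi2').2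
        have g2 : A i' - E1 (x : X) ∈ W8 := by
          have h' := hW8sym _ (hT2D i' hi1').2
          rwa [neg_sub] at h'
        have hs := hsum5 _ _ _ _ _ g1 g2 f1 f2 hxj
        rwa [show (E2 (E1 (x : X)) - A i') + (A i' - E1 (x : X)) + (E1 (x : X) - A i)
          + (A i - (x : X)) + ((x : X) - A j) = E2 (E1 (x : X)) - A j by abel] at hs
  · -- (c)
    intro x hx
    apply Subtype.ext
    show E ((x : X)) = (x : X)
    apply hfix_notD
    intro i hd
    exact hx i hd.2
end
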